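/- arXiv:2301.13650 — 8 statements merged into one kernel-verified Lean document; each statement's English description precedes it below -/
import Mathlib

section
/- Let k ≥ 0 and 1 ≤ r ≤ e. Then there is an isomorphism of abelian groups o_L/π^{ek+r}o_L ≅ (ℤ/p^kℤ)^{f(e−r)} × (ℤ/p^{k+1}ℤ)^{fr}. -/
set_option synthInstance.maxHeartbeats 1000000
set_option maxHeartbeats 2000000

open Ideal

private lemma card_torsion {R : Type*} [CommRing R] [IsDomain R] {t : R} (ht : t ≠ 0) (n w : ℕ) :
    Nat.card {x : R ⧸ Ideal.span {t ^ n} // Ideal.Quotient.mk _ (t ^ w) * x = 0} =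
      Nat.card (R ⧸ Ideal.span {t ^ min n w}) := by
  set m := n - min n w with hm
  have hle : (Ideal.span {t ^ min n w} : Submodule R R) ≤
      Submodule.comap (LinearMap.lsmul R R (t ^ m)) (Ideal.span {t ^ n} : Submodule R R) := by
    intro x hx
    rw [Ideal.mem_span_singleton] at hx
    obtain ⟨z, rfl⟩ := hx
    simp only [Submodule.mem_comap, LinearMap.lsmul_apply, smul_eq_mul]
    rw [Ideal.mem_span_singleton, ← mul_assoc, ← pow_add]
    have : m + min n w = n := by omega
    rw [this]
    exact Dvd.intro z rfl
  set F := Submodule.mapQ _ _ (LinearMap.lsmul R R (t ^ m)) hle with hF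
  have F_apply : ∀ x : R, F (Ideal.Quotient.mk _ x) = Ideal.Quotient.mk _ (t ^ m * x) := by
    intro x
    rw [← Ideal.Quotient.mk_eq_mk, ← Ideal.Quotient.mk_eq_mk, hF, Submodule.mapQ_apply,
      LinearMap.lsmul_apply, smul_eq_mul]
  have hprop : ∀ x, Ideal.Quotient.mk (Ideal.span {t ^ n}) (t ^ w) * F x = 0 := by
    intro x
    obtain ⟨y, rfl⟩ := Ideal.Quotient.mk_surjective x
    rw [F_apply, ← _root_.map_mul, Ideal.Quotient.eq_zero_iff_mem, Ideal.mem_span_singleton,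
      ← mul_assoc, ← pow_add]
    exact (pow_dvd_pow t (by omega : n ≤ w + m)).mul_right y
  set G : (R ⧸ Ideal.span {t ^ min n w}) →
      {x : R ⧸ Ideal.span {t ^ n} // Ideal.Quotient.mk _ (t ^ w) * x = 0} :=
    fun x => ⟨F x, hprop x⟩ with hG
  have hGinj : Function.Injective G := by
    intro x y hxy
    obtain ⟨x, rfl⟩ := Ideal.Quotient.mk_surjective x
    obtain ⟨y, rfl⟩ := Ideal.Quotient.mk_surjective y
    have h1 : F (Ideal.Quotient.mk _ x) = F (Ideal.Quotient.mk _ y) :=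
      congrArg Subtype.val hxy
    rw [F_apply, F_apply, Ideal.Quotient.mk_eq_mk_iff_sub_mem, ← mul_sub,
      Ideal.mem_span_singleton] at h1
    have hn : n = m + min n w := by omega
    rw [hn, pow_add] at h1
    have h2 := (mul_dvd_mul_iff_left (pow_ne_zero m ht)).mp h1
    rw [Ideal.Quotient.mk_eq_mk_iff_sub_mem, Ideal.mem_span_singleton]
    exact h2
  have hGsurj : Function.Surjective G := by
    rintro ⟨x, hx⟩
    obtain ⟨y, rfl⟩ := Ideal.Quotient.mk_surjective x
    rw [← _root_.map_mul, Ideal.Quotient.eq_zero_iff_mem, Ideal.mem_span_singleton] at hx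
    rcases le_total n w with h | h
    · have hm0 : m = 0 := by omega
      refine ⟨Ideal.Quotient.mk _ y, Subtype.ext ?_⟩
      show F _ = _
      rw [F_apply, hm0, pow_zero, one_mul]
    · obtain ⟨z, hz⟩ := hx
      have hy : y = t ^ m * z := by
        apply mul_left_cancel₀ (pow_ne_zero w ht)
        rw [hz, ← mul_assoc, ← pow_add]
        congr 2
        omega
      refine ⟨Ideal.Quotient.mk _ z, Subtype.ext ?_⟩
      show F _ = _
      rw [F_apply, ← hy]
  exact (Nat.card_congr (Equiv.ofBijective G ⟨hGinj, hGsurj⟩)).symm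

private lemma nsmul_quot_eq {R : Type*} [CommRing R] (I : Ideal R) (n j : ℕ) (x : R ⧸ I) :
    (n ^ j) • x = Ideal.Quotient.mk I ((n : R) ^ j) * x := by
  rw [nsmul_eq_mul, Nat.cast_pow, map_pow, map_natCast]

private lemma card_nsmul_ker_congr {A B : Type*} [AddCommMonoid A] [AddCommMonoid B]
    (φ : A ≃+ B) (n : ℕ) :
    Nat.card {x : A // n • x = 0} = Nat.card {x : B // n • x = 0} := by
  refine Nat.card_congr (φ.toEquiv.subtypeEquiv fun x => ?_)
  constructor
  · intro h
    show n • φ x = 0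
    rw [← map_nsmul, h, map_zero]
  · intro h
    apply φ.injective
    rw [map_nsmul, map_zero]
    exact h
  
private lemma card_nsmul_ker_pi {ι : Type*} [Fintype ι] (M : ι → Type*)
    [∀ i, AddCommMonoid (M i)] (n : ℕ) :
    Nat.card {x : ∀ i, M i // n • x = 0} = ∏ i, Nat.card {y : M i // n • y = 0} := by
  rw [← Nat.card_pi]
  refine Nat.card_congr ((Equiv.subtypeEquivRight fun x => ?_).trans Equiv.subtypePiEquivPi)
  simp [funext_iff]

private noncomputable def padicQuotEquiv (p : ℕ) [Fact p.Prime] (m : ℕ) :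
    (ℤ_[p] ⧸ Ideal.span {(p : ℤ_[p]) ^ m}) ≃+* ZMod (p ^ m) := by
  refine (Ideal.quotEquivOfEq (PadicInt.ker_toZModPow m).symm).trans
    (RingHom.quotientKerEquivOfSurjective ?_)
  haveI : NeZero (p ^ m) := ⟨pow_ne_zero _ (Nat.Prime.ne_zero Fact.out)⟩
  intro x
  obtain ⟨a, rfl⟩ := ZMod.natCast_zmod_surjective (n := p ^ m) x
  exact ⟨(a : ℤ_[p]), map_natCast _ a⟩

private lemma padic_quot_card (p : ℕ) [Fact p.Prime] (m : ℕ) :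
    Nat.card (ℤ_[p] ⧸ Ideal.span {(p : ℤ_[p]) ^ m}) = p ^ m := by
  rw [Nat.card_congr (padicQuotEquiv p m).toEquiv, Nat.card_zmod]

private noncomputable def snfEquiv (p : ℕ) [Fact p.Prime] (O : Type*) [CommRing O] [IsDomain O]
    [Algebra ℤ_[p] O] [Module.Finite ℤ_[p] O] [Module.Free ℤ_[p] O]
    (I : Ideal O) (hI : I ≠ ⊥) (c : Module.Free.ChooseBasisIndex ℤ_[p] O → ℕ)
    (hspan : ∀ i, Ideal.span {I.smithCoeffs (Module.Free.chooseBasis ℤ_[p] O) hI i} =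
      Ideal.span {(p : ℤ_[p]) ^ c i}) :
    (O ⧸ I) ≃+ ∀ i, ℤ_[p] ⧸ Ideal.span {(p : ℤ_[p]) ^ c i} :=
  ((I.quotientEquivPiSpan (Module.Free.chooseBasis ℤ_[p] O) hI).toAddEquiv).trans
    (AddEquiv.piCongrRight fun i => (Ideal.quotEquivOfEq (hspan i)).toAddEquiv)

private noncomputable def snfEquivZMod (p : ℕ) [Fact p.Prime] (O : Type*) [CommRing O]
    [IsDomain O] [Algebra ℤ_[p] O] [Module.Finite ℤ_[p] O] [Module.Free ℤ_[p] O]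
    (I : Ideal O) (hI : I ≠ ⊥) (c : Module.Free.ChooseBasisIndex ℤ_[p] O → ℕ)
    (hspan : ∀ i, Ideal.span {I.smithCoeffs (Module.Free.chooseBasis ℤ_[p] O) hI i} =
      Ideal.span {(p : ℤ_[p]) ^ c i}) :
    (O ⧸ I) ≃+ ∀ i, ZMod (p ^ c i) :=
  (snfEquiv p O I hI c hspan).trans
    (AddEquiv.piCongrRight fun i => (padicQuotEquiv p (c i)).toAddEquiv)

private lemma cardZ_torsion (p : ℕ) [Fact p.Prime] (m j : ℕ) :
    Nat.card {y : ℤ_[p] ⧸ Ideal.span {(p : ℤ_[p]) ^ m} // (p ^ j) • y = 0} = p ^ min m j := by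
  calc Nat.card {y : ℤ_[p] ⧸ Ideal.span {(p : ℤ_[p]) ^ m} // (p ^ j) • y = 0}
      = Nat.card {y : ℤ_[p] ⧸ Ideal.span {(p : ℤ_[p]) ^ m} //
          Ideal.Quotient.mk _ ((p : ℤ_[p]) ^ j) * y = 0} :=
        Nat.card_congr (Equiv.subtypeEquivRight fun y => by rw [nsmul_quot_eq])
    _ = Nat.card (ℤ_[p] ⧸ Ideal.span {(p : ℤ_[p]) ^ min m j}) :=
        card_torsion (PadicInt.irreducible_p (p := p)).ne_zero m j
    _ = p ^ min m j := padic_quot_card p _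

private lemma key_count (p : ℕ) [Fact p.Prime] (O : Type*) [CommRing O] [IsDomain O]
    [Algebra ℤ_[p] O] [Module.Finite ℤ_[p] O] [Module.Free ℤ_[p] O]
    {π : O} (hπ0 : π ≠ 0) (e f N : ℕ) (u : Oˣ) (hu : (p : O) * u = π ^ e)
    (hcard : ∀ m : ℕ, Nat.card (O ⧸ Ideal.span {π ^ m}) = p ^ (f * m))
    (hI : Ideal.span {π ^ N} ≠ ⊥) (c : Module.Free.ChooseBasisIndex ℤ_[p] O → ℕ)
    (hspan : ∀ i, Ideal.span
        {(Ideal.span {π ^ N}).smithCoeffs (Module.Free.chooseBasis ℤ_[p] O) hI i} =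
      Ideal.span {(p : ℤ_[p]) ^ c i}) (j : ℕ) :
    f * min N (e * j) = ∑ i, min (c i) j := by
  have hp2 : (2 : ℕ) ≤ p := (Fact.out : p.Prime).two_le
  have hcondO : ∀ x : O ⧸ Ideal.span {π ^ N},
      (p ^ j) • x = 0 ↔ Ideal.Quotient.mk _ (π ^ (e * j)) * x = 0 := by
    intro x
    rw [nsmul_quot_eq]
    have h1 : π ^ (e * j) = (p : O) ^ j * (u : O) ^ j := by
      rw [pow_mul, ← hu, mul_pow]
    have h2 : (p : O) ^ j = π ^ (e * j) * ((u⁻¹ : Oˣ) : O) ^ j := by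
      rw [h1, mul_assoc, ← mul_pow, Units.mul_inv, one_pow, mul_one]
    constructor
    · intro h
      rw [h1, _root_.map_mul, mul_assoc, mul_left_comm, h, mul_zero]
    · intro h
      rw [h2, _root_.map_mul, mul_assoc, mul_left_comm, h, mul_zero]
  refine Nat.pow_right_injective hp2 ?_
  calc p ^ (f * min N (e * j))
      = Nat.card (O ⧸ Ideal.span {π ^ min N (e * j)}) := (hcard _).symm
    _ = Nat.card {x : O ⧸ Ideal.span {π ^ N} //
          Ideal.Quotient.mk _ (π ^ (e * j)) * x = 0} := (card_torsion hπ0 N (e * j)).symm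
    _ = Nat.card {x : O ⧸ Ideal.span {π ^ N} // (p ^ j) • x = 0} :=
          Nat.card_congr (Equiv.subtypeEquivRight fun x => (hcondO x).symm)
    _ = Nat.card {x : (∀ i, ℤ_[p] ⧸ Ideal.span {(p : ℤ_[p]) ^ c i}) // (p ^ j) • x = 0} :=
          card_nsmul_ker_congr (snfEquiv p O _ hI c hspan) (p ^ j)
    _ = ∏ i, Nat.card {y : ℤ_[p] ⧸ Ideal.span {(p : ℤ_[p]) ^ c i} // (p ^ j) • y = 0} :=
          card_nsmul_ker_pi _ (p ^ j)
    _ = ∏ i, p ^ min (c i) j :=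
          Finset.prod_congr rfl fun i _ => cardZ_torsion p (c i) j
    _ = p ^ ∑ i, min (c i) j := Finset.prod_pow_eq_pow_sum _ _ _

private def zmodCongr {m n : ℕ} (h : m = n) : ZMod m ≃+* ZMod n := h ▸ RingEquiv.refl _

set_option maxHeartbeats 1000000 in
/-- Let `p` be prime and let `O` be the ring of integers of a finite extension of `ℚ_p`:
a discrete valuation ring which is a finite free `ℤ_p`-module of rank `e·f`, with uniformizer
`π`, ramification index `e` (so `p` is associated to `π^e`) and inertia degree `f` (so the
residue field `O/π` has `p^f` elements).  For `k ≥ 0` and `1 ≤ r ≤ e` there is an isomorphism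
of abelian groups `O/π^{ek+r}O ≅ (ℤ/p^kℤ)^{f(e−r)} × (ℤ/p^{k+1}ℤ)^{fr}`. -/
theorem stmt0 (p : ℕ) [Fact p.Prime] (O : Type*) [CommRing O] [IsDomain O]
    [IsDiscreteValuationRing O] [Algebra ℤ_[p] O] [Module.Finite ℤ_[p] O] [Module.Free ℤ_[p] O]
    (e f : ℕ) (hrank : Module.finrank ℤ_[p] O = e * f)
    (π : O) (hπ : Irreducible π)
    (he : Associated ((p : O)) (π ^ e))
    (hf : Nat.card (O ⧸ Ideal.span {π}) = p ^ f)
    (k r : ℕ) (hr1 : 1 ≤ r) (hre : r ≤ e) :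
    Nonempty ((O ⧸ Ideal.span {π ^ (e * k + r)}) ≃+
      ((Fin (f * (e - r)) → ZMod (p ^ k)) × (Fin (f * r) → ZMod (p ^ (k + 1))))) := by
  classical
  have hπ0 : π ≠ 0 := hπ.ne_zero
  have hp2 : (2 : ℕ) ≤ p := (Fact.out : p.Prime).two_le
  -- Step 1: cardinality of O ⧸ π^m
  have cardA : ∀ m : ℕ, Nat.card (O ⧸ Ideal.span {π ^ m}) = p ^ (f * m) := by
    intro m
    induction m with
    | zero =>
      rw [pow_zero, Ideal.span_singleton_one, Nat.mul_zero, pow_zero]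
      haveI : Subsingleton (O ⧸ (⊤ : Ideal O)) := by
        refine Ideal.Quotient.subsingleton_iff.mpr rfl
      exact Nat.card_of_subsingleton 0
    | succ m ih =>
      have hle : Ideal.span {π ^ (m + 1)} ≤ Ideal.span {π ^ m} :=
        Ideal.span_singleton_le_span_singleton.mpr (pow_dvd_pow π (Nat.le_succ m))
      set g := (Ideal.Quotient.factor hle).toAddMonoidHom with hg
      have h1 : Nat.card (O ⧸ Ideal.span {π ^ (m + 1)}) =
          Nat.card ((O ⧸ Ideal.span {π ^ (m + 1)}) ⧸ g.ker) * Nat.card g.ker :=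
        AddSubgroup.card_eq_card_quotient_mul_card_addSubgroup g.ker
      have h2 : Nat.card ((O ⧸ Ideal.span {π ^ (m + 1)}) ⧸ g.ker) =
          Nat.card (O ⧸ Ideal.span {π ^ m}) := by
        refine Nat.card_congr ((QuotientAddGroup.quotientKerEquivRange g).toEquiv.trans
          (Equiv.subtypeUnivEquiv fun x => ?_))
        obtain ⟨y, rfl⟩ := Ideal.Quotient.mk_surjective x
        exact ⟨Ideal.Quotient.mk _ y, Ideal.Quotient.factor_mk hle y⟩
      have h3 : Nat.card g.ker = p ^ f := by
        have hker : ∀ x : O ⧸ Ideal.span {π ^ (m + 1)},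
            x ∈ g.ker ↔ Ideal.Quotient.mk _ π * x = 0 := by
          intro x
          obtain ⟨y, rfl⟩ := Ideal.Quotient.mk_surjective x
          rw [AddMonoidHom.mem_ker]
          show Ideal.Quotient.factor hle (Ideal.Quotient.mk _ y) = 0 ↔ _
          rw [Ideal.Quotient.factor_mk, Ideal.Quotient.eq_zero_iff_mem,
            Ideal.mem_span_singleton, ← _root_.map_mul, Ideal.Quotient.eq_zero_iff_mem,
            Ideal.mem_span_singleton, pow_succ']
          exact ⟨fun h => mul_dvd_mul_left π h, fun h => (mul_dvd_mul_iff_left hπ0).mp h⟩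
        have := card_torsion (R := O) hπ0 (m + 1) 1
        rw [min_eq_right (by omega : 1 ≤ m + 1), pow_one, hf] at this
        rw [← this]
        exact Nat.card_congr (Equiv.subtypeEquivRight hker)
      have harith : f * m + f = f * (m + 1) := by ring
      rw [h1, h2, h3, ih, ← pow_add, harith]
  -- setup smith normal form
  set N := e * k + r with hN
  have hcardι : Fintype.card (Module.Free.ChooseBasisIndex ℤ_[p] O) = e * f := by
    rw [← Module.finrank_eq_card_chooseBasisIndex, hrank]
  have hI : Ideal.span {π ^ N} ≠ ⊥ := by
    rw [Ne, Ideal.span_singleton_eq_bot]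
    exact pow_ne_zero _ hπ0
  have ha0 : ∀ i, (Ideal.span {π ^ N}).smithCoeffs (Module.Free.chooseBasis ℤ_[p] O) hI i ≠ 0 :=
    fun i => Ideal.smithCoeffs_ne_zero _ _ hI i
  have hcc : ∀ i, ∃ cc : ℕ,
      Associated ((Ideal.span {π ^ N}).smithCoeffs (Module.Free.chooseBasis ℤ_[p] O) hI i)
        ((p : ℤ_[p]) ^ cc) := fun i =>
    IsDiscreteValuationRing.associated_pow_irreducible (ha0 i) PadicInt.irreducible_p
  choose c hc using hcc
  have hspan : ∀ i, Ideal.span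
      {(Ideal.span {π ^ N}).smithCoeffs (Module.Free.chooseBasis ℤ_[p] O) hI i} =
      Ideal.span {(p : ℤ_[p]) ^ c i} := fun i =>
    Ideal.span_singleton_eq_span_singleton.mpr (hc i)
  -- the key counting identity
  obtain ⟨u, hu⟩ := he
  have key : ∀ j : ℕ, f * min N (e * j) = ∑ i, min (c i) j := fun j =>
    key_count p O hπ0 e f N u hu cardA hI c hspan j
  -- combinatorics: determine the exponents c i
  have hkeyk := key k
  rw [min_eq_right (by omega : e * k ≤ N)] at hkeyk
  have hkeyk1 := key (k + 1)
  rw [min_eq_left (by rw [hN, Nat.mul_add, Nat.mul_one]; omega : N ≤ e * (k + 1))] at hkeyk1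
  have hkeyk2 := key (k + 2)
  rw [min_eq_left (by rw [hN, Nat.mul_add]; nlinarith : N ≤ e * (k + 2))] at hkeyk2
  have hgek : ∀ i, k ≤ c i := by
    by_contra hcon
    push_neg at hcon
    obtain ⟨i0, hi0⟩ := hcon
    have hlt : ∑ i, min (c i) k < ∑ _i : Module.Free.ChooseBasisIndex ℤ_[p] O, k :=
      Finset.sum_lt_sum (fun i _ => min_le_right _ _)
        ⟨i0, Finset.mem_univ _, by omega⟩
    rw [Finset.sum_const, Finset.card_univ, hcardι, smul_eq_mul] at hlt
    rw [← hkeyk] at hlt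
    have : f * (e * k) = e * f * k := by ring
    omega
  have hlek1 : ∀ i, c i ≤ k + 1 := by
    have hpt : ∀ i ∈ (Finset.univ : Finset (Module.Free.ChooseBasisIndex ℤ_[p] O)),
        min (c i) (k + 1) ≤ min (c i) (k + 2) := fun i _ => by omega
    have hsum : ∑ i, min (c i) (k + 1) = ∑ i, min (c i) (k + 2) := by
      rw [← hkeyk1, ← hkeyk2]
    intro i
    have := (Finset.sum_eq_sum_iff_of_le hpt).mp hsum i (Finset.mem_univ i)
    omega
  set P : Module.Free.ChooseBasisIndex ℤ_[p] O → Prop := fun i => c i = k + 1 with hP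
  have hsumc : ∑ i, c i = f * N := by
    rw [hkeyk1]
    exact Finset.sum_congr rfl fun i _ => by have := hlek1 i; omega
  have hfilter : (Finset.univ.filter P).card = f * r := by
    have hsplit : ∀ i, c i = k + (if P i then 1 else 0) := by
      intro i
      have h1 := hgek i
      have h2 := hlek1 i
      by_cases h : P i
      · have hck : c i = k + 1 := h
        rw [if_pos h]
        omega
      · have hck : ¬(c i = k + 1) := h
        rw [if_neg h]
        omega
    have htot : ∑ i, c i = e * f * k + (Finset.univ.filter P).card := by
      calc ∑ i, c i = ∑ i, (k + if P i then 1 else 0) :=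
            Finset.sum_congr rfl fun i _ => hsplit i
        _ = (∑ _i : Module.Free.ChooseBasisIndex ℤ_[p] O, k) + ∑ i, (if P i then 1 else 0) :=
            Finset.sum_add_distrib
        _ = e * f * k + (Finset.univ.filter P).card := by
            rw [Finset.sum_const, Finset.card_univ, hcardι, smul_eq_mul,
              ← Finset.card_filter]
    rw [hsumc] at htot
    have hexp : f * N = e * f * k + f * r := by rw [hN]; ring
    exact (Nat.add_left_cancel (hexp.symm.trans htot)).symm
  have hPcard : Fintype.card {x // P x} = f * r := by
    rw [Fintype.card_subtype]
    exact hfilter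
  have hQcard : Fintype.card {x // ¬P x} = f * (e - r) := by
    rw [Fintype.card_subtype_compl, hPcard, hcardι]
    have h1 : f * (e - r) + f * r = e * f := by
      rw [← Nat.mul_add, Nat.sub_add_cancel hre, Nat.mul_comm]
    omega
  -- assemble the final isomorphism
  have Φ : (O ⧸ Ideal.span {π ^ N}) ≃+ ∀ i, ZMod (p ^ c i) :=
    snfEquivZMod p O (Ideal.span {π ^ N}) hI c hspan
  have Ψ₁ : (∀ i, ZMod (p ^ c i)) ≃+*
      ((∀ i : {x // P x}, ZMod (p ^ c i.1)) × (∀ i : {x // ¬P x}, ZMod (p ^ c i.1))) :=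
    RingEquiv.piEquivPiSubtypeProd P _
  have hcP : ∀ i : {x // P x}, p ^ c i.1 = p ^ (k + 1) := fun i => by
    have : c i.1 = k + 1 := i.2
    rw [this]
  have hcQ : ∀ i : {x // ¬P x}, p ^ c i.1 = p ^ k := fun i => by
    have h1 := hgek i.1
    have h2 := hlek1 i.1
    have h3 : ¬ (c i.1 = k + 1) := i.2
    have : c i.1 = k := by omega
    rw [this]
  have Ψ₂ :
      ((∀ i : {x // P x}, ZMod (p ^ c i.1)) × (∀ i : {x // ¬P x}, ZMod (p ^ c i.1))) ≃+*
      ((∀ _i : {x // P x}, ZMod (p ^ (k + 1))) × (∀ _i : {x // ¬P x}, ZMod (p ^ k))) :=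
    RingEquiv.prodCongr
      (RingEquiv.piCongrRight fun i => zmodCongr (hcP i))
      (RingEquiv.piCongrRight fun i => zmodCongr (hcQ i))
  have eP : {x // P x} ≃ Fin (f * r) := Fintype.equivFinOfCardEq hPcard
  have eQ : {x // ¬P x} ≃ Fin (f * (e - r)) := Fintype.equivFinOfCardEq hQcard
  have Ψ₃ :
      ((∀ _i : {x // P x}, ZMod (p ^ (k + 1))) × (∀ _i : {x // ¬P x}, ZMod (p ^ k))) ≃+*
      ((Fin (f * r) → ZMod (p ^ (k + 1))) × (Fin (f * (e - r)) → ZMod (p ^ k))) :=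
    RingEquiv.prodCongr
      (RingEquiv.piCongrLeft (fun _ => ZMod (p ^ (k + 1))) eP)
      (RingEquiv.piCongrLeft (fun _ => ZMod (p ^ k)) eQ)
  exact ⟨Φ.trans ((Ψ₁.trans (Ψ₂.trans Ψ₃)).toAddEquiv.trans AddEquiv.prodComm)⟩
end

section
/- Fix m ∈ {0,1,…,q−2} and let n = m + j(q−1) for some j ≥ 0. Write P_n(s) = Σ_{k=0}^n b_k^{(n)} s^k with b_k^{(n)} ∈ L. Then: (1) b_k^{(n)} = 0 whenever k is not congruent to n modulo (q−1); and (2) for each 0 ≤ i ≤ j, the coefficient of s^{⟨i⟩} in P_{⟨j⟩}(s) equals r^{(m)}_{i,j}/(⟨i⟩)!. -/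
open Polynomial PowerSeries Finset

/-- The Lubin–Tate logarithm `log_LT(Z) = Σ_{k≥0} π^{-k} Z^{q^k}` (for `q ≥ 2` the inner sum has
at most one nonzero term, since `q^k = n` forces `k ≤ n`). -/
noncomputable def logLT {L : Type*} [Field L] (q : ℕ) (π : L) : PowerSeries L :=
  PowerSeries.mk fun n => ∑ k ∈ Finset.range (n + 1), if n = q ^ k then (π ^ k)⁻¹ else 0

/-- The polynomial `P_n(Y) = Σ_{k=0}^n d_n^{(k)} Y^k / k!`, where `d_n^{(k)}` is the coefficient
of `Z^n` in `log_LT(Z)^k`; equivalently `exp(Y·log_LT(Z)) = Σ_{n≥0} P_n(Y) Z^n`. -/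
noncomputable def LTpoly {L : Type*} [Field L] (q : ℕ) (π : L) (n : ℕ) : Polynomial L :=
  ∑ k ∈ Finset.range (n + 1),
    Polynomial.C (PowerSeries.coeff n (logLT q π ^ k) / (k.factorial : L)) * Polynomial.X ^ k

/-- `r^{(m)}_{i,j} := Σ_{k ∈ Q_m(i,j)} (m+i(q−1))!/(∏_ℓ k_ℓ!) · π^{−Σ_{ℓ≥1} ℓ·k_ℓ}`, where
`Q_m(i,j)` is the set of finitely supported sequences `(k_ℓ)_{ℓ≥0}` of naturals with
`Σ_ℓ k_ℓ = m + i(q−1)` and `Σ_{ℓ≥1} k_ℓ·(q^ℓ−1)/(q−1) = j−i` (here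
`(q^ℓ−1)/(q−1) = Σ_{t<ℓ} q^t`). -/
noncomputable def rcoef {L : Type*} [Field L] (q : ℕ) (π : L) (m i j : ℕ) : L :=
  ∑ᶠ (k : ℕ →₀ ℕ) (_ : (∑ ℓ ∈ k.support, k ℓ) = m + i * (q - 1) ∧
      (∑ ℓ ∈ k.support, k ℓ * ∑ t ∈ Finset.range ℓ, q ^ t) = j - i),
    ((m + i * (q - 1)).factorial : L) /
      ((∏ ℓ ∈ k.support, ((k ℓ).factorial : L)) * π ^ (∑ ℓ ∈ k.support, ℓ * k ℓ))

set_option maxHeartbeats 2000000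
set_option synthInstance.maxHeartbeats 1000000

namespace LTaux

variable {L : Type*} [Field L]

lemma monomial_eq (e : ℕ) (c : L) :
    PowerSeries.monomial e c = PowerSeries.C c * PowerSeries.X ^ e := by
  ext d
  rw [PowerSeries.coeff_monomial, PowerSeries.coeff_C_mul, PowerSeries.coeff_X_pow,
    mul_ite, mul_one, mul_zero]

lemma coeff_logLT_pow_self (q : ℕ) (hq2 : 2 ≤ q) (π : L) (ℓ : ℕ) :
    PowerSeries.coeff (q ^ ℓ) (logLT q π) = (π ^ ℓ)⁻¹ := by
  rw [logLT, PowerSeries.coeff_mk]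
  have h1 : ∀ k ∈ Finset.range (q ^ ℓ + 1),
      (if q ^ ℓ = q ^ k then (π ^ k)⁻¹ else 0) = if ℓ = k then (π ^ k)⁻¹ else 0 := by
    intro k _
    congr 1
    simp only [eq_iff_iff]
    exact ⟨fun h => Nat.pow_right_injective hq2 h, fun h => by rw [h]⟩
  rw [Finset.sum_congr rfl h1, Finset.sum_ite_eq]
  rw [if_pos]
  exact Finset.mem_range.mpr (Nat.lt_succ_of_lt (Nat.lt_pow_self (n := ℓ) (by omega)))

lemma coeff_logLT_eq_zero (q : ℕ) (π : L) (d : ℕ) (h : ∀ ℓ, d ≠ q ^ ℓ) :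
    PowerSeries.coeff d (logLT q π) = 0 := by
  rw [logLT, PowerSeries.coeff_mk]
  exact Finset.sum_eq_zero fun k _ => if_neg (h k)

lemma modeq_pow_q (q : ℕ) (hq1 : 1 ≤ q) (ℓ : ℕ) : q ^ ℓ ≡ 1 [MOD q - 1] := by
  have h : q ≡ 1 [MOD q - 1] := ((Nat.modEq_iff_dvd' hq1).mpr dvd_rfl).symm
  simpa using h.pow ℓ

lemma coeff_pow_logLT_eq_zero (q : ℕ) (hq2 : 2 ≤ q) (π : L) :
    ∀ (K n : ℕ), ¬ n ≡ K [MOD q - 1] → PowerSeries.coeff n (logLT q π ^ K) = 0 := by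
  intro K
  induction K with
  | zero =>
    intro n hn
    rw [pow_zero, PowerSeries.coeff_one, if_neg]
    intro h
    exact hn (by rw [h])
  | succ K ih =>
    intro n hn
    rw [pow_succ, PowerSeries.coeff_mul]
    apply Finset.sum_eq_zero
    rintro ⟨a, b⟩ hab
    rw [Finset.HasAntidiagonal.mem_antidiagonal] at hab
    by_cases ha : a ≡ K [MOD q - 1]
    · by_cases hb : ∃ ℓ, b = q ^ ℓ
      · exfalso
        obtain ⟨ℓ, rfl⟩ := hb
        apply hn
        rw [← hab]
        exact ha.add (modeq_pow_q q (by omega) ℓ)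
      · push_neg at hb
        rw [coeff_logLT_eq_zero q π b hb, mul_zero]
    · rw [ih a ha, zero_mul]

lemma trunc_pow_coeff {N : ℕ} (f g : PowerSeries L)
    (h : ∀ d ≤ N, PowerSeries.coeff d f = PowerSeries.coeff d g) (K : ℕ) :
    ∀ d ≤ N, PowerSeries.coeff d (f ^ K) = PowerSeries.coeff d (g ^ K) := by
  induction K with
  | zero => intro d _; rw [pow_zero, pow_zero]
  | succ K ih =>
    intro d hd
    rw [pow_succ, pow_succ, PowerSeries.coeff_mul, PowerSeries.coeff_mul]
    apply Finset.sum_congr rfl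
    rintro ⟨a, b⟩ hab
    rw [Finset.HasAntidiagonal.mem_antidiagonal] at hab
    rw [ih a (by omega), h b (by omega)]

lemma coeff_gM (q : ℕ) (hq2 : 2 ≤ q) (π : L) (M d : ℕ) (hd : d < M) :
    PowerSeries.coeff d (∑ ℓ ∈ Finset.range M, PowerSeries.monomial (q ^ ℓ) ((π ^ ℓ)⁻¹)) =
      PowerSeries.coeff d (logLT q π) := by
  rw [map_sum]
  by_cases hex : ∃ ℓ, d = q ^ ℓ
  · obtain ⟨ℓ0, rfl⟩ := hex
    rw [coeff_logLT_pow_self q hq2 π ℓ0]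
    have h1 : ∀ ℓ ∈ Finset.range M,
        PowerSeries.coeff (q ^ ℓ0) (PowerSeries.monomial (q ^ ℓ) ((π ^ ℓ)⁻¹)) =
          if ℓ0 = ℓ then (π ^ ℓ)⁻¹ else 0 := by
      intro ℓ _
      rw [PowerSeries.coeff_monomial]
      congr 1
      simp only [eq_iff_iff]
      exact ⟨fun h => Nat.pow_right_injective hq2 h, fun h => by rw [h]⟩
    rw [Finset.sum_congr rfl h1, Finset.sum_ite_eq, if_pos]
    exact Finset.mem_range.mpr (lt_of_le_of_lt (Nat.le_of_lt (Nat.lt_pow_self (n := ℓ0) (by omega))) hd)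
  · push_neg at hex
    rw [coeff_logLT_eq_zero q π d hex]
    apply Finset.sum_eq_zero
    intro ℓ _
    rw [PowerSeries.coeff_monomial, if_neg (hex ℓ)]

lemma prod_monomial {ι : Type*} (s : Finset ι) (e : ι → ℕ) (c : ι → L) :
    ∏ x ∈ s, PowerSeries.monomial (e x) (c x) =
      PowerSeries.monomial (∑ x ∈ s, e x) (∏ x ∈ s, c x) := by
  simp only [monomial_eq]
  rw [Finset.prod_mul_distrib, ← map_prod, Finset.prod_pow_eq_pow_sum]

lemma coeff_gM_pow (q : ℕ) (π : L) (M K N : ℕ) :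
    PowerSeries.coeff N
        ((∑ ℓ ∈ Finset.range M, PowerSeries.monomial (q ^ ℓ) ((π ^ ℓ)⁻¹)) ^ K) =
      ∑ k ∈ (Finset.piAntidiag (Finset.range M) K).filter
          (fun k => N = ∑ ℓ ∈ Finset.range M, k ℓ * q ^ ℓ),
        (Nat.multinomial (Finset.range M) k : L) *
          ∏ ℓ ∈ Finset.range M, ((π ^ ℓ)⁻¹) ^ k ℓ := by
  classical
  rw [Finset.sum_pow_eq_sum_piAntidiag, map_sum, Finset.sum_filter]
  apply Finset.sum_congr rfl
  intro k _
  have h1 : ∀ ℓ ∈ Finset.range M,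
      (PowerSeries.monomial (q ^ ℓ) ((π ^ ℓ)⁻¹)) ^ k ℓ =
        PowerSeries.monomial (k ℓ * q ^ ℓ) (((π ^ ℓ)⁻¹) ^ k ℓ) := by
    intro ℓ _
    rw [monomial_eq, mul_pow, ← map_pow, ← pow_mul, ← monomial_eq, mul_comm (q ^ ℓ) (k ℓ)]
  rw [Finset.prod_congr rfl h1, prod_monomial]
  rw [show ((Nat.multinomial (Finset.range M) k : PowerSeries L)) =
      PowerSeries.C ((Nat.multinomial (Finset.range M) k : L)) from
    (map_natCast PowerSeries.C _).symm]
  rw [PowerSeries.coeff_C_mul, PowerSeries.coeff_monomial, mul_ite, mul_zero]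


lemma geom_q (q : ℕ) (hq1 : 1 ≤ q) (ℓ : ℕ) :
    q ^ ℓ = 1 + (q - 1) * ∑ t ∈ Finset.range ℓ, q ^ t := by
  obtain ⟨d, rfl⟩ : ∃ d, q = d + 1 := ⟨q - 1, by omega⟩
  simp only [Nat.add_sub_cancel]
  induction ℓ with
  | zero => simp
  | succ ℓ ih =>
    rw [Finset.sum_range_succ, pow_succ, ih]
    ring

lemma exp_decomp (q : ℕ) (hq1 : 1 ≤ q) (M : ℕ) (k : ℕ → ℕ) :
    ∑ ℓ ∈ Finset.range M, k ℓ * q ^ ℓ =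
      (∑ ℓ ∈ Finset.range M, k ℓ) +
        (q - 1) * ∑ ℓ ∈ Finset.range M, k ℓ * ∑ t ∈ Finset.range ℓ, q ^ t := by
  rw [Finset.mul_sum, ← Finset.sum_add_distrib]
  apply Finset.sum_congr rfl
  intro ℓ _
  rw [geom_q q hq1 ℓ]
  ring

lemma rcoef_eq (q : ℕ) (hq2 : 2 ≤ q) (π : L) [CharZero L] (hπ0 : π ≠ 0)
    (m i j : ℕ) (hij : i ≤ j) :
    rcoef q π m i j =
      ∑ k ∈ (Finset.piAntidiag (Finset.range (m + j * (q - 1) + 1)) (m + i * (q - 1))).filter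
          (fun k => (m + j * (q - 1)) =
            ∑ ℓ ∈ Finset.range (m + j * (q - 1) + 1), k ℓ * q ^ ℓ),
        (Nat.multinomial (Finset.range (m + j * (q - 1) + 1)) k : L) *
          ∏ ℓ ∈ Finset.range (m + j * (q - 1) + 1), ((π ^ ℓ)⁻¹) ^ k ℓ := by
  classical
  set D := q - 1 with hD
  set K := m + i * D with hK
  set N := m + j * D with hN
  set M := N + 1 with hM
  have hD1 : 1 ≤ D := by omega
  have hjD : j * D = i * D + D * (j - i) := by
    rw [mul_comm i D, ← Nat.mul_add, Nat.add_sub_cancel' hij, mul_comm]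
  have hNK : N = K + D * (j - i) := by rw [hN, hK, hjD]; ring
  have hjiN : j - i ≤ N := by
    have h1 : j ≤ j * D := Nat.le_mul_of_pos_right j (by omega)
    omega
  -- the support bound
  have hsupp_bound : ∀ k : ℕ →₀ ℕ,
      (∑ ℓ ∈ k.support, k ℓ * ∑ t ∈ Finset.range ℓ, q ^ t) = j - i →
      k.support ⊆ Finset.range M := by
    intro k hC2 ℓ hℓ
    have hkℓ : k ℓ ≠ 0 := Finsupp.mem_support_iff.mp hℓ
    rw [Finset.mem_range]
    rcases Nat.eq_zero_or_pos ℓ with rfl | hpos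
    · omega
    · have hsl : ℓ ≤ ∑ t ∈ Finset.range ℓ, q ^ t := by
        calc ℓ = ∑ _t ∈ Finset.range ℓ, 1 := by simp
        _ ≤ ∑ t ∈ Finset.range ℓ, q ^ t :=
          Finset.sum_le_sum fun t _ => Nat.one_le_pow t q (by omega)
      have h2 : k ℓ * (∑ t ∈ Finset.range ℓ, q ^ t) ≤ j - i := by
        rw [← hC2]
        exact Finset.single_le_sum (f := fun ℓ => k ℓ * ∑ t ∈ Finset.range ℓ, q ^ t)
          (fun x _ => Nat.zero_le _) hℓ
      have h3 : (∑ t ∈ Finset.range ℓ, q ^ t) ≤ k ℓ * (∑ t ∈ Finset.range ℓ, q ^ t) :=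
        Nat.le_mul_of_pos_left _ (Nat.pos_of_ne_zero hkℓ)
      omega
  -- set equality
  have hset : {k : ℕ →₀ ℕ | (∑ ℓ ∈ k.support, k ℓ) = K ∧
        (∑ ℓ ∈ k.support, k ℓ * ∑ t ∈ Finset.range ℓ, q ^ t) = j - i} =
      ↑((Finset.finsuppAntidiag (Finset.range M) K).filter
        (fun k => N = ∑ ℓ ∈ Finset.range M, k ℓ * q ^ ℓ)) := by
    ext k
    simp only [Set.mem_setOf_eq, Finset.coe_filter, Finset.mem_finsuppAntidiag]
    constructor
    · rintro ⟨hC1, hC2⟩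
      have hsub := hsupp_bound k hC2
      have hs1 : (∑ ℓ ∈ k.support, k ℓ) = ∑ ℓ ∈ Finset.range M, k ℓ :=
        Finset.sum_subset hsub fun x _ hx => Finsupp.notMem_support_iff.mp hx
      have hs2 : (∑ ℓ ∈ k.support, k ℓ * ∑ t ∈ Finset.range ℓ, q ^ t) =
          ∑ ℓ ∈ Finset.range M, k ℓ * ∑ t ∈ Finset.range ℓ, q ^ t :=
        Finset.sum_subset hsub fun x _ hx => by
          rw [Finsupp.notMem_support_iff.mp hx, zero_mul]
      refine ⟨⟨by rw [← hs1, hC1], hsub⟩, ?_⟩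
      rw [exp_decomp q (by omega) M k, ← hs1, hC1, ← hs2, hC2, hNK]
    · rintro ⟨⟨hsum, hsub⟩, hexp⟩
      have hs1 : (∑ ℓ ∈ k.support, k ℓ) = ∑ ℓ ∈ Finset.range M, k ℓ :=
        Finset.sum_subset hsub fun x _ hx => Finsupp.notMem_support_iff.mp hx
      have hs2 : (∑ ℓ ∈ k.support, k ℓ * ∑ t ∈ Finset.range ℓ, q ^ t) =
          ∑ ℓ ∈ Finset.range M, k ℓ * ∑ t ∈ Finset.range ℓ, q ^ t :=
        Finset.sum_subset hsub fun x _ hx => by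
          rw [Finsupp.notMem_support_iff.mp hx, zero_mul]
      refine ⟨by rw [hs1, hsum], ?_⟩
      rw [exp_decomp q (by omega) M k, hsum, hNK] at hexp
      have hcanc := Nat.add_left_cancel hexp
      rw [← hD] at hcanc
      rw [hs2]
      exact (Nat.eq_of_mul_eq_mul_left (show 0 < D by omega) hcanc).symm
  -- rewrite the finsum as a finset sum
  have h1 : rcoef q π m i j = ∑ᶠ (k : ℕ →₀ ℕ) (_ : k ∈ {k : ℕ →₀ ℕ |
      (∑ ℓ ∈ k.support, k ℓ) = K ∧
      (∑ ℓ ∈ k.support, k ℓ * ∑ t ∈ Finset.range ℓ, q ^ t) = j - i}),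
      ((K.factorial : L) /
        ((∏ ℓ ∈ k.support, ((k ℓ).factorial : L)) * π ^ (∑ ℓ ∈ k.support, ℓ * k ℓ))) := rfl
  rw [h1, hset, finsum_mem_coe_finset]
  -- now a bijection between finsupps and functions
  refine Finset.sum_nbij' (fun k => ⇑k)
    (fun c => if h : ∀ a, c a ≠ 0 → a ∈ Finset.range M then Finsupp.onFinset (Finset.range M) c h
      else 0) ?_ ?_ ?_ ?_ ?_
  · intro k hk
    rw [Finset.mem_filter, Finset.mem_finsuppAntidiag] at hk
    rw [Finset.mem_filter, Finset.mem_piAntidiag]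
    exact ⟨⟨hk.1.1, fun a ha => hk.1.2 (Finsupp.mem_support_iff.mpr ha)⟩, hk.2⟩
  · intro c hc
    rw [Finset.mem_filter, Finset.mem_piAntidiag] at hc
    beta_reduce
    rw [dif_pos hc.1.2, Finset.mem_filter, Finset.mem_finsuppAntidiag]
    refine ⟨⟨?_, Finsupp.support_onFinset_subset⟩, ?_⟩
    · exact hc.1.1
    · simpa only [Finsupp.onFinset_apply] using hc.2
  · intro k hk
    rw [Finset.mem_filter, Finset.mem_finsuppAntidiag] at hk
    have h : ∀ a, k a ≠ 0 → a ∈ Finset.range M :=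
      fun a ha => hk.1.2 (Finsupp.mem_support_iff.mpr ha)
    beta_reduce
    rw [dif_pos h]
    ext a
    simp [Finsupp.onFinset_apply]
  · intro c hc
    rw [Finset.mem_filter, Finset.mem_piAntidiag] at hc
    beta_reduce
    rw [dif_pos hc.1.2]
    funext a
    simp [Finsupp.onFinset_apply]
  · intro k hk
    rw [Finset.mem_filter, Finset.mem_finsuppAntidiag] at hk
    have hsub : k.support ⊆ Finset.range M := hk.1.2
    have hsumK : (∑ ℓ ∈ Finset.range M, k ℓ) = K := hk.1.1
    have hprod : (∏ ℓ ∈ k.support, ((k ℓ).factorial : L)) =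
        ∏ ℓ ∈ Finset.range M, ((k ℓ).factorial : L) :=
      Finset.prod_subset hsub fun x _ hx => by
        rw [Finsupp.notMem_support_iff.mp hx]; simp
    have hsumE : (∑ ℓ ∈ k.support, ℓ * k ℓ) = ∑ ℓ ∈ Finset.range M, ℓ * k ℓ :=
      Finset.sum_subset hsub fun x _ hx => by
        rw [Finsupp.notMem_support_iff.mp hx, mul_zero]
    have hne : (∏ ℓ ∈ Finset.range M, ((k ℓ).factorial : L)) ≠ 0 :=
      Finset.prod_ne_zero_iff.mpr fun ℓ _ =>
        Nat.cast_ne_zero.mpr (Nat.factorial_ne_zero _)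
    have hmult : ((Nat.multinomial (Finset.range M) ⇑k : ℕ) : L) =
        (K.factorial : L) / ∏ ℓ ∈ Finset.range M, ((k ℓ).factorial : L) := by
      rw [eq_div_iff hne, mul_comm]
      have hspec := Nat.multinomial_spec (Finset.range M) ⇑k
      rw [hsumK] at hspec
      exact_mod_cast congrArg (Nat.cast : ℕ → L) hspec
    have hpow : (∏ ℓ ∈ Finset.range M, ((π ^ ℓ)⁻¹) ^ k ℓ) =
        (π ^ (∑ ℓ ∈ Finset.range M, ℓ * k ℓ))⁻¹ := by
      have : ∀ ℓ ∈ Finset.range M, ((π ^ ℓ)⁻¹) ^ k ℓ = (π⁻¹) ^ (ℓ * k ℓ) := by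
        intro ℓ _
        rw [← inv_pow, ← pow_mul]
      rw [Finset.prod_congr rfl this, Finset.prod_pow_eq_pow_sum, inv_pow]
    rw [hprod, hsumE, hmult, hpow, ← div_eq_mul_inv, div_div]

lemma LTpoly_coeff_le (q : ℕ) (π : L) (n k : ℕ) (hk : k ≤ n) :
    (LTpoly q π n).coeff k =
      PowerSeries.coeff n (logLT q π ^ k) / (k.factorial : L) := by
  rw [LTpoly, Polynomial.finset_sum_coeff]
  have h1 : ∀ x ∈ Finset.range (n + 1),
      (Polynomial.C (PowerSeries.coeff n (logLT q π ^ x) / (x.factorial : L)) *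
        Polynomial.X ^ x).coeff k =
      if k = x then PowerSeries.coeff n (logLT q π ^ x) / (x.factorial : L) else 0 := by
    intro x _
    rw [Polynomial.coeff_C_mul, Polynomial.coeff_X_pow, mul_ite, mul_one, mul_zero]
  rw [Finset.sum_congr rfl h1, Finset.sum_ite_eq, if_pos (Finset.mem_range.mpr (by omega))]

lemma LTpoly_coeff_gt (q : ℕ) (π : L) (n k : ℕ) (hk : n < k) :
    (LTpoly q π n).coeff k = 0 := by
  rw [LTpoly, Polynomial.finset_sum_coeff]
  have h1 : ∀ x ∈ Finset.range (n + 1),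
      (Polynomial.C (PowerSeries.coeff n (logLT q π ^ x) / (x.factorial : L)) *
        Polynomial.X ^ x).coeff k =
      if k = x then PowerSeries.coeff n (logLT q π ^ x) / (x.factorial : L) else 0 := by
    intro x _
    rw [Polynomial.coeff_C_mul, Polynomial.coeff_X_pow, mul_ite, mul_one, mul_zero]
  rw [Finset.sum_congr rfl h1, Finset.sum_ite_eq, if_neg]
  rw [Finset.mem_range]
  omega

end LTaux


namespace LTaux

theorem aux_two_le_q (p : ℕ) [Fact p.Prime] (L : Type*) [Field L]
    [Algebra ℚ_[p] L] [FiniteDimensional ℚ_[p] L]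
    [Algebra ℤ_[p] L] [IsScalarTower ℤ_[p] ℚ_[p] L]
    (π : L) (hπmem : π ∈ integralClosure ℤ_[p] L)
    (hirr : Irreducible (⟨π, hπmem⟩ : integralClosure ℤ_[p] L))
    (q : ℕ) (hq : Nat.card ((integralClosure ℤ_[p] L) ⧸
      Ideal.span {(⟨π, hπmem⟩ : integralClosure ℤ_[p] L)}) = q) :
    2 ≤ q := by
  haveI : CharZero L := charZero_of_injective_algebraMap (algebraMap ℚ_[p] L).injective
  set O := integralClosure ℤ_[p] L with hO
  set ϖ : O := ⟨π, hπmem⟩ with hϖ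
  set I : Ideal O := Ideal.span {ϖ} with hI
  -- O is a finite ℤ_p module
  haveI hfin : Module.Finite ℤ_[p] O :=
    IsIntegralClosure.finite ℤ_[p] ℚ_[p] L O
  -- nontriviality of quotient
  haveI : Nontrivial (O ⧸ I) := by
    apply Ideal.Quotient.nontrivial_iff.mpr
    rw [hI, Ne, Ideal.span_singleton_eq_top]
    exact hirr.not_isUnit
  -- find v with p^v ∈ I
  have hϖ0 : ϖ ≠ 0 := hirr.ne_zero
  have hint : IsIntegral ℤ_[p] ϖ := integralClosure.isIntegral ϖ
  have key : ∀ (n : ℕ) (P : Polynomial ℤ_[p]), P.natDegree ≤ n → P ≠ 0 →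
      Polynomial.aeval ϖ P = 0 → ∃ a : ℤ_[p], a ≠ 0 ∧ algebraMap ℤ_[p] O a ∈ I := by
    intro n
    induction n with
    | zero =>
      intro P hdeg hP0 hev
      refine ⟨P.coeff 0, fun h => hP0 ?_, ?_⟩
      · rw [Polynomial.eq_C_of_natDegree_le_zero hdeg, h, map_zero]
      · rw [← Polynomial.X_mul_divX_add P, map_add, map_mul, Polynomial.aeval_X,
          Polynomial.aeval_C] at hev
        rw [hI, Ideal.mem_span_singleton]
        exact ⟨-Polynomial.aeval ϖ P.divX, by linear_combination hev⟩
    | succ n ih =>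
      intro P hdeg hP0 hev
      by_cases hc : P.coeff 0 = 0
      · have hXdiv : Polynomial.X * P.divX = P := by
          have := Polynomial.X_mul_divX_add P
          rwa [hc, map_zero, add_zero] at this
        have hdivX0 : P.divX ≠ 0 := by
          intro h
          rw [← hXdiv, h, mul_zero] at hP0
          exact hP0 rfl
        have hev' : Polynomial.aeval ϖ P.divX = 0 := by
          rw [← hXdiv, map_mul, Polynomial.aeval_X] at hev
          rcases mul_eq_zero.mp hev with h | h
          · exact absurd h hϖ0
          · exact h
        exact ih P.divX (Polynomial.natDegree_divX_eq_natDegree_tsub_one.trans_le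
          (by omega)) hdivX0 hev'
      · refine ⟨P.coeff 0, hc, ?_⟩
        rw [← Polynomial.X_mul_divX_add P, map_add, map_mul, Polynomial.aeval_X,
          Polynomial.aeval_C] at hev
        rw [hI, Ideal.mem_span_singleton]
        exact ⟨-Polynomial.aeval ϖ P.divX, by linear_combination hev⟩
  obtain ⟨P, hPmonic, hPev⟩ := hint
  obtain ⟨a, ha0, hamem⟩ := key P.natDegree P le_rfl hPmonic.ne_zero (by
    rw [Polynomial.aeval_def]; exact hPev)
  obtain ⟨v, u, huv⟩ := IsDiscreteValuationRing.eq_unit_mul_pow_irreducible ha0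
    (PadicInt.prime_p.irreducible)
  have hpv : algebraMap ℤ_[p] O ((p : ℤ_[p]) ^ v) ∈ I := by
    have : ((p : ℤ_[p]) ^ v) = (u⁻¹ : ℤ_[p]ˣ) * a := by
      rw [huv, ← mul_assoc, Units.inv_mul, one_mul]
    rw [this, map_mul]
    exact Ideal.mul_mem_left _ _ hamem
  -- torsion
  have htor : Module.IsTorsionBySet ℤ_[p] (O ⧸ I) (Ideal.span {(p : ℤ_[p]) ^ v} : Ideal ℤ_[p]) := by
    refine (Module.isTorsionBySet_span_singleton_iff _).mpr ?_
    intro x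
    obtain ⟨y, rfl⟩ := Ideal.Quotient.mk_surjective (I := I) x
    have h1 : ((p : ℤ_[p]) ^ v) • Ideal.Quotient.mk I y
        = Ideal.Quotient.mk I (((p : ℤ_[p]) ^ v) • y) := rfl
    show ((p : ℤ_[p]) ^ v) • Ideal.Quotient.mk I y = 0
    rw [h1, Algebra.smul_def, Ideal.Quotient.eq_zero_iff_mem]
    exact Ideal.mul_mem_right _ _ hpv
  letI : Module (ℤ_[p] ⧸ Ideal.span {(p : ℤ_[p]) ^ v}) (O ⧸ I) := htor.module
  haveI : IsScalarTower ℤ_[p] (ℤ_[p] ⧸ Ideal.span {(p : ℤ_[p]) ^ v}) (O ⧸ I) :=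
    htor.isScalarTower
  haveI : Module.Finite ℤ_[p] (O ⧸ I) :=
    Module.Finite.of_surjective (I.mkQ.restrictScalars ℤ_[p]) (Submodule.mkQ_surjective I)
  haveI : Module.Finite (ℤ_[p] ⧸ Ideal.span {(p : ℤ_[p]) ^ v}) (O ⧸ I) :=
    Module.Finite.of_restrictScalars_finite ℤ_[p] _ _
  -- finiteness of ℤ_p/(p^v)
  haveI : Finite (ℤ_[p] ⧸ Ideal.span {(p : ℤ_[p]) ^ v}) := by
    have hsurj : Function.Surjective (PadicInt.toZModPow (p := p) v) := by
      intro x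
      obtain ⟨k, rfl⟩ := ZMod.intCast_surjective (n := p^v) x
      exact ⟨(k : ℤ_[p]), by rw [map_intCast]⟩
    haveI : NeZero (p ^ v) := ⟨pow_ne_zero v (Fact.out (p := p.Prime)).ne_zero⟩
    have e := RingHom.quotientKerEquivOfSurjective hsurj
    exact Finite.of_equiv _
      ((Ideal.quotEquivOfEq (PadicInt.ker_toZModPow v)).symm.trans e).symm.toEquiv
  haveI : Finite (O ⧸ I) := Module.finite_of_finite (ℤ_[p] ⧸ Ideal.span {(p : ℤ_[p]) ^ v})
  rw [← hq]
  exact Finite.one_lt_card_iff_nontrivial.mpr ‹Nontrivial (O ⧸ I)›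


end LTaux

/-- Fix `m ∈ {0,…,q−2}` and let `n = m + j(q−1)`.  Writing `P_n(s) = Σ_k b_k^{(n)} s^k`:
(1) `b_k^{(n)} = 0` whenever `k` is not congruent to `n` modulo `q−1`; and
(2) for `0 ≤ i ≤ j`, the coefficient of `s^{m+i(q−1)}` in `P_{m+j(q−1)}` equals
`r^{(m)}_{i,j}/(m+i(q−1))!`. -/
theorem stmt4 (p : ℕ) [Fact p.Prime] (L : Type*) [Field L]
    [Algebra ℚ_[p] L] [FiniteDimensional ℚ_[p] L]
    [Algebra ℤ_[p] L] [IsScalarTower ℤ_[p] ℚ_[p] L]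
    (π : L) (hπmem : π ∈ integralClosure ℤ_[p] L)
    (hirr : Irreducible (⟨π, hπmem⟩ : integralClosure ℤ_[p] L))
    (q : ℕ) (hq : Nat.card ((integralClosure ℤ_[p] L) ⧸
      Ideal.span {(⟨π, hπmem⟩ : integralClosure ℤ_[p] L)}) = q)
    (m : ℕ) (hm : m ≤ q - 2) (j : ℕ) :
    (∀ k : ℕ, ¬ k ≡ (m + j * (q - 1)) [MOD q - 1] →
        (LTpoly q π (m + j * (q - 1))).coeff k = 0) ∧
      (∀ i : ℕ, i ≤ j →
        (LTpoly q π (m + j * (q - 1))).coeff (m + i * (q - 1)) =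
          rcoef q π m i j / ((m + i * (q - 1)).factorial : L)) := by

  have hq2 : 2 ≤ q := LTaux.aux_two_le_q p L π hπmem hirr q hq
  haveI : CharZero L := charZero_of_injective_algebraMap (algebraMap ℚ_[p] L).injective
  have hπ0 : π ≠ 0 := by
    intro h
    exact hirr.ne_zero (Subtype.ext (by simpa using h))
  constructor
  · intro k hk
    by_cases hkN : k ≤ m + j * (q - 1)
    · rw [LTaux.LTpoly_coeff_le q π _ k hkN,
        LTaux.coeff_pow_logLT_eq_zero q hq2 π k _ (fun h => hk h.symm), zero_div]
    · exact LTaux.LTpoly_coeff_gt q π _ k (by omega)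
  · intro i hi
    have hKN : m + i * (q - 1) ≤ m + j * (q - 1) := by
      have := Nat.mul_le_mul_right (q - 1) hi
      omega
    rw [LTaux.LTpoly_coeff_le q π _ _ hKN]
    congr 1
    have htr := LTaux.trunc_pow_coeff (N := m + j * (q - 1)) (logLT q π)
      (∑ ℓ ∈ Finset.range (m + j * (q - 1) + 1), PowerSeries.monomial (q ^ ℓ) ((π ^ ℓ)⁻¹))
      (fun d hd => (LTaux.coeff_gM q hq2 π _ d (by omega)).symm) (m + i * (q - 1))
      (m + j * (q - 1)) le_rfl
    rw [htr, LTaux.coeff_gM_pow, LTaux.rcoef_eq q hq2 π hπ0 m i j hi]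
end

section
/- Fix m ∈ {0,1,…,q−2} and let j ≥ i ≥ 0. Then: (1) π^{j−i}·r^{(m)}_{i,j} lies in o_L (i.e. v_π(π^{j−i}·r^{(m)}_{i,j}) ≥ 0); and (2) π^{j−i}·r^{(m)}_{i,j} is congruent to the binomial coefficient C(⟨i⟩, j−i) modulo π^{q−1}o_L. -/
open Polynomial PowerSeries Finset

/-- Fix `m ∈ {0,…,q−2}` and let `j ≥ i ≥ 0`.  Then:
(1) `π^{j−i}·r^{(m)}_{i,j}` lies in `o_L`; and
(2) `π^{j−i}·r^{(m)}_{i,j}` is congruent to the binomial coefficient `C(m+i(q−1), j−i)`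
modulo `π^{q−1}·o_L`. -/
theorem stmt6 (p : ℕ) [Fact p.Prime] (L : Type*) [Field L]
    [Algebra ℚ_[p] L] [FiniteDimensional ℚ_[p] L]
    [Algebra ℤ_[p] L] [IsScalarTower ℤ_[p] ℚ_[p] L]
    (π : L) (hπmem : π ∈ integralClosure ℤ_[p] L)
    (hirr : Irreducible (⟨π, hπmem⟩ : integralClosure ℤ_[p] L))
    (q : ℕ) (hq : Nat.card ((integralClosure ℤ_[p] L) ⧸
      Ideal.span {(⟨π, hπmem⟩ : integralClosure ℤ_[p] L)}) = q)
    (m : ℕ) (hm : m ≤ q - 2) (i j : ℕ) (hij : i ≤ j) :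
    π ^ (j - i) * rcoef q π m i j ∈ integralClosure ℤ_[p] L ∧
      ∃ z ∈ integralClosure ℤ_[p] L,
        π ^ (j - i) * rcoef q π m i j - ((m + i * (q - 1)).choose (j - i) : L) =
          π ^ (q - 1) * z := by
  classical
  have hπ0 : π ≠ 0 := fun h => hirr.ne_zero (Subtype.ext h)
  have hchar : CharZero L := charZero_of_injective_algebraMap (algebraMap ℚ_[p] L).injective
  set d := j - i with hd
  set N := m + i * (q - 1) with hNdef
  have hq1N : q ≤ 1 → N = 0 := by
    intro h
    have h1 : q - 1 = 0 := by omega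
    have h2 : m = 0 := by omega
    simp [hNdef, h1, h2]
  set g : ℕ → ℕ := fun ℓ => ∑ t ∈ Finset.range ℓ, q ^ t with hgdef
  have hg0 : g 0 = 0 := by simp [hgdef]
  have hg1 : g 1 = 1 := by simp [hgdef]
  have hg_ge : 1 ≤ q → ∀ ℓ, ℓ ≤ g ℓ := by
    intro hq' ℓ
    calc ℓ = ∑ _t ∈ Finset.range ℓ, 1 := by simp
    _ ≤ g ℓ := Finset.sum_le_sum fun t _ => Nat.one_le_pow _ _ (by omega)
  have hg_ge2 : 2 ≤ q → ∀ ℓ, 2 ≤ ℓ → ℓ + (q - 1) ≤ g ℓ := by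
    intro hq' ℓ hℓ
    induction ℓ, hℓ using Nat.le_induction with
    | base =>
      have : g 2 = 1 + q := by simp [hgdef, Finset.sum_range_succ]
      omega
    | succ n hn ih =>
      have h1 : g (n + 1) = g n + q ^ n := by simp [hgdef, Finset.sum_range_succ]
      have h2 : 1 ≤ q ^ n := Nat.one_le_pow _ _ (by omega)
      omega
  set P : (ℕ →₀ ℕ) → Prop := fun k => (∑ ℓ ∈ k.support, k ℓ) = N ∧
    (∑ ℓ ∈ k.support, k ℓ * g ℓ) = d with hPdef
  have hsub : ∀ k : ℕ →₀ ℕ, P k → k.support ⊆ Finset.range (d + 1) := by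
    intro k hk ℓ hℓ
    rw [Finset.mem_range]
    rcases Nat.eq_zero_or_pos ℓ with h0 | h1
    · omega
    rcases le_or_gt q 1 with hql | hqg
    · exfalso
      have h0 : (∑ ℓ ∈ k.support, k ℓ) = 0 := hk.1.trans (hq1N hql)
      have := (Finset.sum_eq_zero_iff.1 h0) ℓ hℓ
      exact Finsupp.mem_support_iff.1 hℓ this
    · have hterm : k ℓ * g ℓ ≤ d := hk.2 ▸
        Finset.single_le_sum (f := fun ℓ => k ℓ * g ℓ) (fun _ _ => Nat.zero_le _) hℓ
      have hgg : ℓ ≤ g ℓ := hg_ge (by omega) ℓ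
      have hk1 : 1 ≤ k ℓ := Nat.one_le_iff_ne_zero.2 (Finsupp.mem_support_iff.1 hℓ)
      have : ℓ ≤ k ℓ * g ℓ := le_trans hgg (Nat.le_mul_of_pos_left _ hk1)
      omega
  set T : Finset (ℕ →₀ ℕ) := (Finset.finsuppAntidiag (Finset.range (d + 1)) N).filter P with hT
  have hmemT : ∀ k, k ∈ T ↔ P k := by
    intro k
    constructor
    · exact fun h => (Finset.mem_filter.1 h).2
    · intro h
      refine Finset.mem_filter.2 ⟨Finset.mem_finsuppAntidiag.2 ⟨?_, hsub k h⟩, h⟩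
      rw [← Finset.sum_subset (hsub k h) (fun x _ hx => Finsupp.notMem_support_iff.1 hx)]
      exact h.1
  have hrc : rcoef q π m i j = ∑ k ∈ T,
      ((N.factorial : L) /
        ((∏ ℓ ∈ k.support, ((k ℓ).factorial : L)) * π ^ (∑ ℓ ∈ k.support, ℓ * k ℓ))) := by
    have h1 : rcoef q π m i j = ∑ᶠ k ∈ {k : ℕ →₀ ℕ | P k},
        ((N.factorial : L) /
          ((∏ ℓ ∈ k.support, ((k ℓ).factorial : L)) * π ^ (∑ ℓ ∈ k.support, ℓ * k ℓ))) := rfl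
    rw [h1, show {k : ℕ →₀ ℕ | P k} = (↑T : Set (ℕ →₀ ℕ)) from
      Set.ext fun k => by simp [hmemT k], finsum_mem_coe_finset]
  have hsle : ∀ k ∈ T, (∑ ℓ ∈ k.support, ℓ * k ℓ) ≤ d := by
    intro k hk
    obtain ⟨h1, h2⟩ := (hmemT k).1 hk
    rcases le_or_gt q 1 with hql | hqg
    · rcases Nat.eq_zero_or_pos q with h0 | h1'
      · have h0' : (∑ ℓ ∈ k.support, k ℓ) = 0 := h1.trans (hq1N hql)
        have : ∀ ℓ ∈ k.support, ℓ * k ℓ = 0 := fun ℓ hℓ => by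
          have := (Finset.sum_eq_zero_iff.1 h0') ℓ hℓ; simp [this]
        rw [Finset.sum_eq_zero this]; omega
      · calc (∑ ℓ ∈ k.support, ℓ * k ℓ) ≤ ∑ ℓ ∈ k.support, k ℓ * g ℓ :=
            Finset.sum_le_sum fun ℓ _ => by
              rw [mul_comm]; exact Nat.mul_le_mul_left _ (hg_ge h1' ℓ)
        _ = d := h2
    · calc (∑ ℓ ∈ k.support, ℓ * k ℓ) ≤ ∑ ℓ ∈ k.support, k ℓ * g ℓ :=
          Finset.sum_le_sum fun ℓ _ => by
            rw [mul_comm]; exact Nat.mul_le_mul_left _ (hg_ge (by omega) ℓ)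
      _ = d := h2
  have key : π ^ d * rcoef q π m i j = ∑ k ∈ T,
      ((Nat.multinomial k.support k : L) * π ^ (d - ∑ ℓ ∈ k.support, ℓ * k ℓ)) := by
    rw [hrc, Finset.mul_sum]
    refine Finset.sum_congr rfl fun k hk => ?_
    obtain ⟨h1, h2⟩ := (hmemT k).1 hk
    have hs := hsle k hk
    have hBne : (∏ ℓ ∈ k.support, ((k ℓ).factorial : L)) ≠ 0 :=
      Finset.prod_ne_zero_iff.2 fun ℓ _ => Nat.cast_ne_zero.2 (Nat.factorial_ne_zero _)
    have hmul : ((Nat.multinomial k.support k : L)) *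
        (∏ ℓ ∈ k.support, ((k ℓ).factorial : L)) = (N.factorial : L) := by
      have hspec := Nat.multinomial_spec k.support k
      rw [h1] at hspec
      rw [mul_comm]
      exact_mod_cast congrArg (Nat.cast : ℕ → L) hspec
    have hpow : π ^ d = π ^ (d - ∑ ℓ ∈ k.support, ℓ * k ℓ) * π ^ (∑ ℓ ∈ k.support, ℓ * k ℓ) := by
      rw [← pow_add]; congr 1; omega
    rw [hpow]
    rw [← hmul]
    field_simp
  have part1 : π ^ d * rcoef q π m i j ∈ integralClosure ℤ_[p] L := by
    rw [key]
    exact Subalgebra.sum_mem _ fun k _ =>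
      mul_mem (Subalgebra.natCast_mem _ _) (pow_mem hπmem _)
  refine ⟨part1, ?_⟩
  rcases le_or_gt q 1 with hql | hq2
  · refine ⟨π ^ d * rcoef q π m i j - (N.choose d : L),
      sub_mem part1 (Subalgebra.natCast_mem _ _), ?_⟩
    have h0 : q - 1 = 0 := by omega
    simp [h0]
  · have hq' : 2 ≤ q := hq2
    set k₀ : ℕ →₀ ℕ := Finsupp.single 0 (N - d) + Finsupp.single 1 d with hk₀def
    have hk₀supp : k₀.support ⊆ {0, 1} := by
      refine subset_trans Finsupp.support_add ?_
      intro x hx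
      rcases Finset.mem_union.1 hx with h | h
      · have := Finsupp.support_single_subset h
        simp only [Finset.mem_singleton] at this
        simp [this]
      · have := Finsupp.support_single_subset h
        simp only [Finset.mem_singleton] at this
        simp [this]
    have hk₀0 : k₀ 0 = N - d := by simp [hk₀def, Finsupp.single_apply]
    have hk₀1 : k₀ 1 = d := by simp [hk₀def, Finsupp.single_apply]
    have hk₀big : ∀ ℓ, 2 ≤ ℓ → k₀ ℓ = 0 := by
      intro ℓ hℓ
      simp only [hk₀def, Finsupp.add_apply, Finsupp.single_apply]
      rw [if_neg (by omega), if_neg (by omega)]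
      rfl
    have hsmall : ∀ k ∈ T, (∀ ℓ, 2 ≤ ℓ → k ℓ = 0) → k 1 = d ∧ k 0 + k 1 = N := by
      intro k hk hk2
      obtain ⟨h1, h2⟩ := (hmemT k).1 hk
      have hsupp : k.support ⊆ {0, 1} := by
        intro ℓ hℓ
        have hne := Finsupp.mem_support_iff.1 hℓ
        by_contra h
        simp only [Finset.mem_insert, Finset.mem_singleton] at h
        push_neg at h
        exact hne (hk2 ℓ (by omega))
      have e1 : k 0 + k 1 = N := by
        rw [← h1, Finset.sum_subset hsupp (fun x _ hx => Finsupp.notMem_support_iff.1 hx),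
          Finset.sum_pair (by norm_num : (0 : ℕ) ≠ 1)]
      have e2 : k 1 = d := by
        have : (∑ ℓ ∈ ({0, 1} : Finset ℕ), k ℓ * g ℓ) = d := by
          rw [← Finset.sum_subset hsupp
            (fun x _ hx => by rw [Finsupp.notMem_support_iff.1 hx, zero_mul])]
          exact h2
        rw [Finset.sum_pair (by norm_num : (0 : ℕ) ≠ 1), hg0, hg1] at this
        omega
      exact ⟨e2, e1⟩
    have hbig : ∀ k ∈ T, (∃ ℓ, 2 ≤ ℓ ∧ k ℓ ≠ 0) →
        (∑ ℓ ∈ k.support, ℓ * k ℓ) + (q - 1) ≤ d := by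
      rintro k hk ⟨ℓ₀, hℓ₀2, hℓ₀ne⟩
      obtain ⟨h1, h2⟩ := (hmemT k).1 hk
      have hℓ₀mem : ℓ₀ ∈ k.support := Finsupp.mem_support_iff.2 hℓ₀ne
      have hstep : ∀ ℓ ∈ k.support,
          ℓ * k ℓ + (if ℓ = ℓ₀ then q - 1 else 0) ≤ k ℓ * g ℓ := by
        intro ℓ hℓ
        have hk1 : 1 ≤ k ℓ := Nat.one_le_iff_ne_zero.2 (Finsupp.mem_support_iff.1 hℓ)
        split_ifs with h
        · subst h
          have hgl : ℓ + (q - 1) ≤ g ℓ := hg_ge2 hq' ℓ hℓ₀2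
          calc ℓ * k ℓ + (q - 1) ≤ k ℓ * ℓ + k ℓ * (q - 1) := by
                have h1 : (q - 1) ≤ k ℓ * (q - 1) := Nat.le_mul_of_pos_left _ hk1
                rw [mul_comm ℓ (k ℓ)]
                omega
          _ = k ℓ * (ℓ + (q - 1)) := by ring
          _ ≤ k ℓ * g ℓ := Nat.mul_le_mul_left _ hgl
        · rw [add_zero, mul_comm]
          exact Nat.mul_le_mul_left _ (hg_ge (by omega) ℓ)
      calc (∑ ℓ ∈ k.support, ℓ * k ℓ) + (q - 1)
          = ∑ ℓ ∈ k.support, (ℓ * k ℓ + if ℓ = ℓ₀ then q - 1 else 0) := by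
            rw [Finset.sum_add_distrib, Finset.sum_ite_eq' k.support ℓ₀ (fun _ => q - 1),
              if_pos hℓ₀mem]
      _ ≤ ∑ ℓ ∈ k.support, k ℓ * g ℓ := Finset.sum_le_sum hstep
      _ = d := h2
    rcases le_or_gt d N with hdN | hNd
    · have hk₀sum1 : (∑ ℓ ∈ k₀.support, k₀ ℓ) = N := by
        rw [Finset.sum_subset hk₀supp (fun x _ hx => Finsupp.notMem_support_iff.1 hx),
          Finset.sum_pair (by norm_num : (0 : ℕ) ≠ 1), hk₀0, hk₀1]
        omega
      have hk₀sum2 : (∑ ℓ ∈ k₀.support, k₀ ℓ * g ℓ) = d := by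
        rw [Finset.sum_subset hk₀supp
          (fun x _ hx => by rw [Finsupp.notMem_support_iff.1 hx, zero_mul]),
          Finset.sum_pair (by norm_num : (0 : ℕ) ≠ 1), hk₀0, hk₀1, hg0, hg1]
        omega
      have hk₀s : (∑ ℓ ∈ k₀.support, ℓ * k₀ ℓ) = d := by
        rw [Finset.sum_subset hk₀supp
          (fun x _ hx => by rw [Finsupp.notMem_support_iff.1 hx, mul_zero]),
          Finset.sum_pair (by norm_num : (0 : ℕ) ≠ 1), hk₀1]
        omega
      have hk₀T : k₀ ∈ T := (hmemT k₀).2 ⟨hk₀sum1, hk₀sum2⟩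
      have hk₀mult : Nat.multinomial k₀.support k₀ = N.choose d := by
        rw [Nat.multinomial, hk₀sum1]
        have hprod : (∏ ℓ ∈ k₀.support, (k₀ ℓ).factorial) = (N - d).factorial * d.factorial := by
          rw [Finset.prod_subset hk₀supp
            (fun x _ hx => by rw [Finsupp.notMem_support_iff.1 hx, Nat.factorial_zero]),
            Finset.prod_pair (by norm_num : (0 : ℕ) ≠ 1), hk₀0, hk₀1]
        rw [hprod, Nat.choose_eq_factorial_div_factorial hdN, mul_comm]
      refine ⟨∑ k ∈ T.erase k₀,
        (Nat.multinomial k.support k : L) * π ^ (d - (∑ ℓ ∈ k.support, ℓ * k ℓ) - (q - 1)),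
        Subalgebra.sum_mem _ (fun k _ => mul_mem (Subalgebra.natCast_mem _ _) (pow_mem hπmem _)),
        ?_⟩
      rw [key, ← Finset.add_sum_erase T _ hk₀T]
      have hterm0 : (Nat.multinomial k₀.support k₀ : L) *
          π ^ (d - ∑ ℓ ∈ k₀.support, ℓ * k₀ ℓ) = (N.choose d : L) := by
        rw [hk₀mult, hk₀s]
        simp
      rw [hterm0]
      have hrest : (∑ k ∈ T.erase k₀,
          (Nat.multinomial k.support k : L) * π ^ (d - ∑ ℓ ∈ k.support, ℓ * k ℓ)) =
          π ^ (q - 1) * ∑ k ∈ T.erase k₀,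
          (Nat.multinomial k.support k : L) *
            π ^ (d - (∑ ℓ ∈ k.support, ℓ * k ℓ) - (q - 1)) := by
        rw [Finset.mul_sum]
        refine Finset.sum_congr rfl fun k hk => ?_
        have hkT : k ∈ T := Finset.mem_of_mem_erase hk
        have hkne : k ≠ k₀ := Finset.ne_of_mem_erase hk
        have hex : ∃ ℓ, 2 ≤ ℓ ∧ k ℓ ≠ 0 := by
          by_contra hex
          push_neg at hex
          obtain ⟨e1, e2⟩ := hsmall k hkT (fun ℓ hℓ => hex ℓ hℓ)
          refine hkne (Finsupp.ext fun ℓ => ?_)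
          by_cases h0 : ℓ = 0
          · subst h0; rw [hk₀0]; omega
          by_cases h1 : ℓ = 1
          · subst h1; rw [hk₀1]; exact e1
          · rw [hk₀big _ (by omega), hex _ (by omega)]
        have hle := hbig k hkT hex
        conv_lhs => rw [show d - (∑ ℓ ∈ k.support, ℓ * k ℓ) =
          (q - 1) + (d - (∑ ℓ ∈ k.support, ℓ * k ℓ) - (q - 1)) by omega, pow_add]
        ring
      rw [hrest]
      ring
    · have hch : N.choose d = 0 := Nat.choose_eq_zero_of_lt hNd
      refine ⟨∑ k ∈ T,
        (Nat.multinomial k.support k : L) * π ^ (d - (∑ ℓ ∈ k.support, ℓ * k ℓ) - (q - 1)),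
        Subalgebra.sum_mem _ (fun k _ => mul_mem (Subalgebra.natCast_mem _ _) (pow_mem hπmem _)),
        ?_⟩
      rw [key, hch, Nat.cast_zero, sub_zero, Finset.mul_sum]
      refine Finset.sum_congr rfl fun k hk => ?_
      have hle : (∑ ℓ ∈ k.support, ℓ * k ℓ) + (q - 1) ≤ d := by
        by_cases hex : ∃ ℓ, 2 ≤ ℓ ∧ k ℓ ≠ 0
        · exact hbig k hk hex
        · push_neg at hex
          obtain ⟨e1, e2⟩ := hsmall k hk (fun ℓ hℓ => hex ℓ hℓ)
          omega
      conv_lhs => rw [show d - (∑ ℓ ∈ k.support, ℓ * k ℓ) =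
        (q - 1) + (d - (∑ ℓ ∈ k.support, ℓ * k ℓ) - (q - 1)) by omega, pow_add]
      ring
end

section
/- Fix m ∈ {0,1,…,q−2}, let j ≥ 0 and 0 ≤ k ≤ m + j(q−1). Then: (1) σ_{k, m+j(q−1)}(Y) = 0 if k is not congruent to m modulo (q−1); and (2) for each 0 ≤ i ≤ j there exists a polynomial τ^{(m)}_{i,j}(X) ∈ L[X] such that σ_{m+i(q−1), m+j(q−1)}(Y) = Y^m · τ^{(m)}_{i,j}(Y^{q−1}). -/
open Polynomial PowerSeries Finset

section helpers
variable {L : Type*} [Field L] (q : ℕ) (π : L)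

lemma coeff_logLT_modeq {b : ℕ} (hq : 2 ≤ q)
    (h : PowerSeries.coeff b (logLT q π) ≠ 0) : b ≡ 1 [MOD q - 1] := by
  rw [logLT, PowerSeries.coeff_mk] at h
  obtain ⟨k, hk, hne⟩ := Finset.exists_ne_zero_of_sum_ne_zero h
  have hb : b = q ^ k := by by_contra hc; simp [hc] at hne
  subst hb
  have h1 : 1 ≡ q [MOD q - 1] := (Nat.modEq_iff_dvd' (by omega)).2 dvd_rfl
  have h2 := h1.symm.pow k
  rwa [one_pow] at h2

lemma constantCoeff_logLT : PowerSeries.coeff 0 (logLT q π) = 0 := by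
  rw [logLT, PowerSeries.coeff_mk, Finset.sum_range_one, pow_zero, if_neg (by omega)]

lemma coeff_one_logLT (hq : 2 ≤ q) : PowerSeries.coeff 1 (logLT q π) = 1 := by
  rw [logLT, PowerSeries.coeff_mk, Finset.sum_range_succ, Finset.sum_range_one,
    pow_zero, pow_one, if_pos rfl, if_neg (by omega), pow_zero, inv_one, add_zero]

lemma coeff_pow_of_lt {f : PowerSeries L} (hf : PowerSeries.coeff 0 f = 0) :
    ∀ n a, a < n → PowerSeries.coeff a (f ^ n) = 0 := by
  intro n
  induction n with
  | zero => intro a ha; omega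
  | succ n ih =>
    intro a ha
    rw [pow_succ, PowerSeries.coeff_mul]
    apply Finset.sum_eq_zero
    intro x hx
    rw [Finset.HasAntidiagonal.mem_antidiagonal] at hx
    rcases lt_or_ge x.1 n with h | h
    · rw [ih x.1 h, zero_mul]
    · have : x.2 = 0 := by omega
      rw [this, hf, mul_zero]

lemma coeff_pow_self {f : PowerSeries L} (hf : PowerSeries.coeff 0 f = 0) :
    ∀ n, PowerSeries.coeff n (f ^ n) = (PowerSeries.coeff 1 f) ^ n := by
  intro n
  induction n with
  | zero => simp
  | succ n ih =>
    rw [pow_succ, PowerSeries.coeff_mul]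
    rw [Finset.sum_eq_single (n, 1)]
    · rw [ih, pow_succ]
    · intro x hx hne
      rw [Finset.HasAntidiagonal.mem_antidiagonal] at hx
      rcases lt_or_ge x.1 n with h | h
      · rw [coeff_pow_of_lt hf n x.1 h, zero_mul]
      · have : x.2 = 0 := by
          rcases Nat.lt_or_ge x.1 (n + 1) with h' | h'
          · exfalso; apply hne
            have : x.1 = n := by omega
            have : x.2 = 1 := by omega
            exact Prod.ext (by omega) this
          · omega
        rw [this, hf, mul_zero]
    · intro h
      exfalso; apply h; rw [Finset.HasAntidiagonal.mem_antidiagonal]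

lemma coeff_pow_logLT_modeq (hq : 2 ≤ q) {n k : ℕ}
    (h : PowerSeries.coeff n (logLT q π ^ k) ≠ 0) : n ≡ k [MOD q - 1] := by
  induction k generalizing n with
  | zero =>
    have : n = 0 := by
      by_contra hn
      apply h
      simp [PowerSeries.coeff_one, hn]
    rw [this]
  | succ k ih =>
    rw [pow_succ, PowerSeries.coeff_mul] at h
    obtain ⟨x, hx, hne⟩ := Finset.exists_ne_zero_of_sum_ne_zero h
    rw [Finset.HasAntidiagonal.mem_antidiagonal] at hx
    have h1 : x.1 ≡ k [MOD q - 1] := ih (fun h0 => hne (by rw [h0, zero_mul]))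
    have h2 : x.2 ≡ 1 [MOD q - 1] :=
      coeff_logLT_modeq q π hq (fun h0 => hne (by rw [h0, mul_zero]))
    rw [← hx]
    exact h1.add h2

lemma coeff_LTpoly (n e : ℕ) : (LTpoly q π n).coeff e =
    if e ≤ n then PowerSeries.coeff n (logLT q π ^ e) / (e.factorial : L) else 0 := by
  rw [LTpoly, Polynomial.finset_sum_coeff]
  simp only [Polynomial.coeff_C_mul, Polynomial.coeff_X_pow, mul_ite, mul_one, mul_zero]
  rw [Finset.sum_ite_eq (Finset.range (n + 1)) e]
  simp [Finset.mem_range, Nat.lt_succ_iff]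

lemma coeff_LTpoly_self [CharZero L] (hq : 2 ≤ q) (n : ℕ) :
    (LTpoly q π n).coeff n = (n.factorial : L)⁻¹ := by
  rw [coeff_LTpoly, if_pos le_rfl, coeff_pow_self (constantCoeff_logLT q π) n,
    coeff_one_logLT q π hq, one_pow, one_div]

lemma coeff_LTpoly_modeq (hq : 2 ≤ q) {n e : ℕ} (h : (LTpoly q π n).coeff e ≠ 0) :
    e ≡ n [MOD q - 1] := by
  rw [coeff_LTpoly] at h
  by_cases he : e ≤ n
  · rw [if_pos he] at h
    have : PowerSeries.coeff n (logLT q π ^ e) ≠ 0 := fun h0 => h (by rw [h0, zero_div])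
    exact (coeff_pow_logLT_modeq q π hq this).symm
  · exact absurd (if_neg he) h

end helpers

section more
variable {L : Type*} [Field L]

lemma coeff_aeval_CXX (P : Polynomial L) (e : ℕ) :
    (Polynomial.aeval (Polynomial.C Polynomial.X * Polynomial.X :
      Polynomial (Polynomial L)) P).coeff e = Polynomial.C (P.coeff e) * Polynomial.X ^ e := by
  induction P using Polynomial.induction_on' with
  | add p q hp hq => rw [map_add, Polynomial.coeff_add, hp, hq, Polynomial.coeff_add, map_add,
      add_mul]
  | monomial n a =>
    rw [Polynomial.aeval_monomial, mul_pow, ← Polynomial.C_pow, ← mul_assoc]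
    have : (algebraMap L (Polynomial (Polynomial L))) a = Polynomial.C (Polynomial.C a) := rfl
    rw [this, ← map_mul, Polynomial.coeff_C_mul, Polynomial.coeff_X_pow, Polynomial.coeff_monomial]
    by_cases h : e = n
    · subst h; simp
    · rw [if_neg h, if_neg (fun hh => h hh.symm)]; simp

lemma exists_tau (P : Polynomial L) (m d : ℕ)
    (h : ∀ e, P.coeff e ≠ 0 → ∃ t, e = m + t * d) :
    ∃ τ : Polynomial L, P = Polynomial.X ^ m * τ.comp (Polynomial.X ^ d) := by
  rcases Nat.eq_zero_or_pos d with rfl | hd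
  · refine ⟨Polynomial.C (P.coeff m), ?_⟩
    rw [Polynomial.C_comp]
    ext e
    rw [mul_comm, Polynomial.C_mul_X_pow_eq_monomial, Polynomial.coeff_monomial]
    by_cases hem : e = m
    · subst hem; rw [if_pos rfl]
    · rw [if_neg (fun hh => hem hh.symm)]
      by_contra hP
      obtain ⟨t, hte⟩ := h e hP
      omega
  · refine ⟨∑ t ∈ Finset.range (P.natDegree + 1),
      Polynomial.C (P.coeff (m + t * d)) * Polynomial.X ^ t, ?_⟩
    have hrw : Polynomial.X ^ m * (∑ t ∈ Finset.range (P.natDegree + 1),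
        Polynomial.C (P.coeff (m + t * d)) * Polynomial.X ^ t).comp (Polynomial.X ^ d) =
        ∑ t ∈ Finset.range (P.natDegree + 1),
          Polynomial.monomial (m + t * d) (P.coeff (m + t * d)) := by
      rw [Polynomial.sum_comp, Finset.mul_sum]
      apply Finset.sum_congr rfl
      intro t _
      rw [Polynomial.mul_comp, Polynomial.C_comp, Polynomial.X_pow_comp, ← pow_mul,
        mul_left_comm, ← pow_add]
      rw [← Polynomial.C_mul_X_pow_eq_monomial]
      ring_nf
    rw [hrw]
    ext e
    rw [Polynomial.finset_sum_coeff]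
    simp only [Polynomial.coeff_monomial]
    by_cases hex : ∃ t, e = m + t * d
    · obtain ⟨t, rfl⟩ := hex
      by_cases ht : t ≤ P.natDegree
      · rw [Finset.sum_eq_single_of_mem t (Finset.mem_range.2 (by omega))]
        · rw [if_pos rfl]
        · intro b _ hb
          rw [if_neg]
          intro hbe
          exact hb (by
            have := Nat.add_left_cancel hbe
            exact Nat.eq_of_mul_eq_mul_right hd this)
      · have hPe : P.coeff (m + t * d) = 0 := by
          apply Polynomial.coeff_eq_zero_of_natDegree_lt
          have : t ≤ t * d := Nat.le_mul_of_pos_right t hd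
          omega
        rw [hPe]
        symm
        apply Finset.sum_eq_zero
        intro b hb
        rw [if_neg]
        intro hbe
        have := Nat.add_left_cancel hbe
        have := Nat.eq_of_mul_eq_mul_right hd this
        rw [Finset.mem_range] at hb
        omega
    · have h0 : P.coeff e = 0 := by
        by_contra hP
        exact hex (h e hP)
      rw [h0]
      symm
      apply Finset.sum_eq_zero
      intro b _
      exact if_neg (fun hbe => hex ⟨b, hbe.symm⟩)

end more

lemma sigma_key {L : Type*} [Field L] [CharZero L] (q : ℕ) (hq : 2 ≤ q) (π : L)
    (σ : ℕ → ℕ → Polynomial L)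
    (hE : ∀ N e, Polynomial.C ((LTpoly q π N).coeff e) * Polynomial.X ^ e =
      ∑ i ∈ Finset.range (N + 1), σ i N * Polynomial.C ((LTpoly q π i).coeff e))
    (N : ℕ) :
    ∀ k, k ≤ N →
      (¬ k ≡ N [MOD q - 1] → σ k N = 0) ∧
      (∀ e, (σ k N).coeff e ≠ 0 → e ≡ N [MOD q - 1]) := by
  suffices h : ∀ t k, k ≤ N → N - k = t →
      (¬ k ≡ N [MOD q - 1] → σ k N = 0) ∧
      (∀ e, (σ k N).coeff e ≠ 0 → e ≡ N [MOD q - 1]) from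
    fun k hk => h (N - k) k hk rfl
  intro t
  induction t using Nat.strong_induction_on with
  | _ t ih =>
  intro k hkN htk
  have hakne : ((k.factorial : L)⁻¹) ≠ 0 :=
    inv_ne_zero (Nat.cast_ne_zero.2 k.factorial_ne_zero)
  have heq := hE N k
  rw [← Finset.sum_erase_add _ _ (Finset.mem_range.2 (by omega) : k ∈ Finset.range (N + 1)),
    coeff_LTpoly_self q π hq k] at heq
  have hs : σ k N * Polynomial.C ((k.factorial : L)⁻¹) =
      Polynomial.C ((LTpoly q π N).coeff k) * Polynomial.X ^ k -
        ∑ i ∈ (Finset.range (N + 1)).erase k,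
          σ i N * Polynomial.C ((LTpoly q π i).coeff k) := by
    rw [heq]; ring
  -- facts about terms in the erased sum
  have hIH : ∀ i ∈ (Finset.range (N + 1)).erase k,
      (LTpoly q π i).coeff k ≠ 0 →
      k ≡ i [MOD q - 1] ∧
        ((¬ i ≡ N [MOD q - 1] → σ i N = 0) ∧
          (∀ e, (σ i N).coeff e ≠ 0 → e ≡ N [MOD q - 1])) := by
    intro i hi h0
    have hik : k ≡ i [MOD q - 1] := coeff_LTpoly_modeq q π hq h0
    have hmem := Finset.mem_of_mem_erase hi
    rw [Finset.mem_range] at hmem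
    have hne : i ≠ k := Finset.ne_of_mem_erase hi
    have hki : k < i := by
      rcases Nat.lt_or_ge i k with h | h
      · exfalso
        rw [coeff_LTpoly, if_neg (by omega)] at h0
        exact h0 rfl
      · omega
    exact ⟨hik, ih (N - i) (by omega) i (by omega) rfl⟩
  constructor
  · intro hkne
    have hz : ∀ i ∈ (Finset.range (N + 1)).erase k,
        σ i N * Polynomial.C ((LTpoly q π i).coeff k) = 0 := by
      intro i hi
      rcases eq_or_ne ((LTpoly q π i).coeff k) 0 with h0 | h0
      · rw [h0, map_zero, mul_zero]
      · obtain ⟨hik, hΦ, _⟩ := hIH i hi h0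
        rw [hΦ (fun hiN => hkne (hik.trans hiN)), zero_mul]
    have ha' : (LTpoly q π N).coeff k = 0 := by
      by_contra h0
      exact hkne (coeff_LTpoly_modeq q π hq h0)
    rw [Finset.sum_eq_zero hz, ha', map_zero, zero_mul, sub_zero] at hs
    rcases mul_eq_zero.1 hs with h | h
    · exact h
    · exact absurd (by rwa [Polynomial.C_eq_zero] at h) hakne
  · intro e he
    have hco := congrArg (fun P : Polynomial L => P.coeff e) hs
    simp only [Polynomial.coeff_mul_C, Polynomial.coeff_sub, Polynomial.coeff_C_mul,
      Polynomial.finset_sum_coeff] at hco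
    have hne0 : (σ k N).coeff e * (k.factorial : L)⁻¹ ≠ 0 := mul_ne_zero he hakne
    rw [hco] at hne0
    by_cases h1 : (LTpoly q π N).coeff k * (Polynomial.X ^ k : Polynomial L).coeff e = 0
    · have h2 : (∑ i ∈ (Finset.range (N + 1)).erase k,
          (σ i N).coeff e * (LTpoly q π i).coeff k) ≠ 0 := by
        intro h0
        rw [h1, h0, sub_zero] at hne0
        exact hne0 rfl
      obtain ⟨i, hi, hterm⟩ := Finset.exists_ne_zero_of_sum_ne_zero h2
      have h0i : (LTpoly q π i).coeff k ≠ 0 := fun h0 => hterm (by rw [h0, mul_zero])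
      obtain ⟨_, _, hΦ2⟩ := hIH i hi h0i
      exact hΦ2 e (fun h0 => hterm (by rw [h0, zero_mul]))
    · have ha' : (LTpoly q π N).coeff k ≠ 0 := fun h0 => h1 (by rw [h0, zero_mul])
      have hXk : (Polynomial.X ^ k : Polynomial L).coeff e ≠ 0 :=
        fun h0 => h1 (by rw [h0, mul_zero])
      have hek : e = k := by
        rw [Polynomial.coeff_X_pow] at hXk
        by_contra hc
        rw [if_neg hc] at hXk
        exact hXk rfl
      rw [hek]
      exact coeff_LTpoly_modeq q π hq ha'

/-- Fix `m ∈ {0,…,q−2}`, `j ≥ 0` and `0 ≤ k ≤ m + j(q−1)`.  Let `σ i j` be the (unique)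
coefficient polynomials with `P_j(Y·s) = Σ_{i≤j} σ_{i,j}(Y) P_i(s)` in `L[Y][s]`.  Then:
(1) `σ_{k, m+j(q−1)}(Y) = 0` if `k` is not congruent to `m` modulo `q−1`; and
(2) for each `0 ≤ i ≤ j` there exists `τ^{(m)}_{i,j}(X) ∈ L[X]` with
`σ_{m+i(q−1), m+j(q−1)}(Y) = Y^m · τ^{(m)}_{i,j}(Y^{q−1})`. -/
theorem stmt8 (p : ℕ) [Fact p.Prime] (L : Type*) [Field L]
    [Algebra ℚ_[p] L] [FiniteDimensional ℚ_[p] L]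
    [Algebra ℤ_[p] L] [IsScalarTower ℤ_[p] ℚ_[p] L]
    (π : L) (hπmem : π ∈ integralClosure ℤ_[p] L)
    (hirr : Irreducible (⟨π, hπmem⟩ : integralClosure ℤ_[p] L))
    (q : ℕ) (hq : Nat.card ((integralClosure ℤ_[p] L) ⧸
      Ideal.span {(⟨π, hπmem⟩ : integralClosure ℤ_[p] L)}) = q)
    (σ : ℕ → ℕ → Polynomial L)
    (hσ : ∀ j : ℕ,
      Polynomial.aeval (Polynomial.C Polynomial.X * Polynomial.X :
          Polynomial (Polynomial L)) (LTpoly q π j) =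
        ∑ i ∈ Finset.range (j + 1),
          Polynomial.C (σ i j) * (LTpoly q π i).map Polynomial.C)
    (m : ℕ) (hm : m ≤ q - 2) (j : ℕ) :
    (∀ k : ℕ, k ≤ m + j * (q - 1) → ¬ k ≡ m [MOD q - 1] →
        σ k (m + j * (q - 1)) = 0) ∧
      ∀ i : ℕ, i ≤ j → ∃ τ : Polynomial L,
        σ (m + i * (q - 1)) (m + j * (q - 1)) =
          Polynomial.X ^ m * τ.comp (Polynomial.X ^ (q - 1)) := by
  haveI : CharZero L := charZero_of_injective_algebraMap (algebraMap ℚ_[p] L).injective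
  have hE : ∀ N e, Polynomial.C ((LTpoly q π N).coeff e) * Polynomial.X ^ e =
      ∑ i ∈ Finset.range (N + 1), σ i N * Polynomial.C ((LTpoly q π i).coeff e) := by
    intro N e
    have h := congrArg (fun P : Polynomial (Polynomial L) => P.coeff e) (hσ N)
    simpa only [coeff_aeval_CXX, Polynomial.finset_sum_coeff, Polynomial.coeff_C_mul,
      Polynomial.coeff_map] using h
  rcases Nat.lt_or_ge q 2 with hq2 | hq2
  · -- degenerate case q ≤ 1
    obtain rfl : m = 0 := by omega
    have hd : q - 1 = 0 := by omega
    have h00 : σ 0 0 = 1 := by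
      have hc00 : (LTpoly q π 0).coeff 0 = 1 := by
        rw [coeff_LTpoly, if_pos le_rfl]
        simp
      have h := hE 0 0
      rw [hc00, Finset.sum_range_one, hc00] at h
      simpa using h.symm
    constructor
    · intro k hk hne
      exfalso
      rw [hd, Nat.mul_zero] at hk
      obtain rfl : k = 0 := by omega
      exact hne (Nat.ModEq.refl 0)
    · intro i hi
      refine ⟨1, ?_⟩
      rw [hd]
      simp only [Nat.mul_zero, Nat.add_zero, pow_zero, Polynomial.one_comp, mul_one]
      exact h00
  · -- main case q ≥ 2
    have key := sigma_key q hq2 π σ hE (m + j * (q - 1))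
    have hNm : (m + j * (q - 1)) ≡ m [MOD q - 1] := by
      unfold Nat.ModEq
      rw [Nat.add_mul_mod_self_right]
    constructor
    · intro k hk hne
      exact (key k hk).1 (fun hc => hne (hc.trans hNm))
    · intro i hi
      have hk : m + i * (q - 1) ≤ m + j * (q - 1) :=
        Nat.add_le_add_left (Nat.mul_le_mul_right _ hi) m
      apply exists_tau
      intro e he
      have heN := (key _ hk).2 e he
      have hem : e ≡ m [MOD q - 1] := heN.trans hNm
      have hmd : m < q - 1 := by omega
      have hm_mod : m % (q - 1) = m := Nat.mod_eq_of_lt hmd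
      have hme : m ≤ e := by
        have h1 : e % (q - 1) = m := by
          have := hem
          unfold Nat.ModEq at this
          omega
        have := Nat.mod_le e (q - 1)
        omega
      have hdvd : (q - 1) ∣ e - m := (Nat.modEq_iff_dvd' hme).1 hem.symm
      refine ⟨(e - m) / (q - 1), ?_⟩
      have := Nat.div_mul_cancel hdvd
      omega
end

section
/- Let (α_k)_{k≥0} be a π-ordering of o_L and let (f_k)_{k≥0} be the associated Lagrange polynomials. Let R be a commutative o_L-algebra that is torsion-free as an o_L-module (so R embeds into R_L := R ⊗_{o_L} L). Then the images of f_0, f_1, f_2, … in R_L[X] form an R-module basis of Int(o_L, R) := { g ∈ R_L[X] : g(a) ∈ R for all a ∈ o_L }. -/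
open Polynomial TensorProduct

/-- The Lagrange polynomials of a sequence `α`: `f_0 = 1` and
`f_k(X) = ∏_{i<k} (X − α_i)/(α_k − α_i)` (the formula below specializes to `1` at `k = 0`). -/
noncomputable def lagrangePoly {L : Type*} [Field L] (α : ℕ → L) (k : ℕ) : Polynomial L :=
  (∏ i ∈ Finset.range k, (Polynomial.X - Polynomial.C (α i))) *
    Polynomial.C ((∏ i ∈ Finset.range k, (α k - α i))⁻¹)

lemma jinj {O L R : Type*} [CommRing O] [IsDomain O] [Field L] [Algebra O L] [IsFractionRing O L]
    [CommRing R] [Algebra O R] [NoZeroSMulDivisors O R] :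
    Function.Injective (algebraMap R (R ⊗[O] L)) := by
  have hbc : IsBaseChange L (TensorProduct.mk O L R 1) := TensorProduct.isBaseChange O R L
  have hlm : IsLocalizedModule (nonZeroDivisors O) (TensorProduct.mk O L R 1) :=
    (isLocalizedModule_iff_isBaseChange (nonZeroDivisors O) L _).mpr hbc
  rw [injective_iff_map_eq_zero]
  intro r hr
  have h1 : (TensorProduct.mk O L R 1) r = 0 := by
    have : algebraMap R (R ⊗[O] L) r = r ⊗ₜ[O] (1 : L) := rfl
    have h2 : (TensorProduct.comm O R L) (r ⊗ₜ[O] (1:L)) = (1:L) ⊗ₜ[O] r := rfl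
    have := congrArg (TensorProduct.comm O R L) (this ▸ hr)
    simpa using this
  obtain ⟨s, hs⟩ := (IsLocalizedModule.eq_zero_iff (nonZeroDivisors O) _).mp h1
  have : (s : O) ≠ 0 := nonZeroDivisors.coe_ne_zero s
  rcases smul_eq_zero.mp hs with h | h
  · exact absurd h this
  · exact h

lemma aux_span {K : Type*} [CommRing K] (G : ℕ → Polynomial K) (u w : ℕ → K)
    (hdeg : ∀ k, (G k).natDegree ≤ k) (hcoeff : ∀ k, (G k).coeff k = u k)
    (hunit : ∀ k, u k * w k = 1) :
    ∀ (n : ℕ) (g : Polynomial K), g.natDegree ≤ n →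
      g ∈ Submodule.span K (Set.range G) := by
  have key : ∀ (n : ℕ) (g : Polynomial K), g.natDegree ≤ n →
      ∃ h : Polynomial K, g = h + (g.coeff n * w n) • G n ∧ h.natDegree ≤ n ∧ h.coeff n = 0 := by
    intro n g hg
    refine ⟨g - (g.coeff n * w n) • G n, by ring, ?_, ?_⟩
    · refine natDegree_sub_le_iff_left ?_ |>.mpr hg
      exact (natDegree_smul_le _ _).trans (hdeg n)
    · rw [coeff_sub, coeff_smul, hcoeff n, smul_eq_mul]
      have : g.coeff n * w n * u n = g.coeff n := by
        rw [mul_assoc, mul_comm (w n), hunit n, mul_one]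
      rw [this, sub_self]
  intro n
  induction n with
  | zero =>
    intro g hg
    obtain ⟨h, hEq, hd, hc⟩ := key 0 g hg
    have : h = 0 := by
      have := Polynomial.eq_C_of_natDegree_le_zero hd
      rw [this, hc, map_zero]
    rw [hEq, this, zero_add]
    exact Submodule.smul_mem _ _ (Submodule.subset_span ⟨0, rfl⟩)
  | succ n ih =>
    intro g hg
    obtain ⟨h, hEq, hd, hc⟩ := key (n+1) g hg
    have hdn : h.natDegree ≤ n := by
      refine natDegree_le_iff_coeff_eq_zero.mpr fun m hm => ?_
      rcases eq_or_lt_of_le (Nat.succ_le_of_lt hm) with h' | h'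
      · rw [← h']; exact hc
      · exact coeff_eq_zero_of_natDegree_lt (lt_of_le_of_lt hd h')
    rw [hEq]
    exact Submodule.add_mem _ (ih h hdn)
      (Submodule.smul_mem _ _ (Submodule.subset_span ⟨n+1, rfl⟩))

lemma aux_li {K R : Type*} [CommRing K] [CommRing R] [Algebra R K]
    (hj : Function.Injective (algebraMap R K))
    (G : ℕ → Polynomial K) (u w : ℕ → K)
    (hdeg : ∀ k, (G k).natDegree ≤ k) (hcoeff : ∀ k, (G k).coeff k = u k)
    (hunit : ∀ k, u k * w k = 1) :
    LinearIndependent R G := by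
  rw [linearIndependent_iff]
  intro l hl
  by_contra hne
  have hsupp : l.support.Nonempty := Finsupp.support_nonempty_iff.mpr hne
  set n := l.support.max' hsupp with hn
  have hnmem : n ∈ l.support := l.support.max'_mem hsupp
  have hcoeffn : ((Finsupp.linearCombination R G) l).coeff n = l n • u n := by
    rw [Finsupp.linearCombination_apply, Finsupp.sum, finset_sum_coeff]
    rw [Finset.sum_eq_single n]
    · rw [coeff_smul, hcoeff]
    · intro i hi hine
      have hilt : i < n := lt_of_le_of_ne (l.support.le_max' i hi) hine
      rw [coeff_smul, coeff_eq_zero_of_natDegree_lt (lt_of_le_of_lt (hdeg i) hilt), smul_zero]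
    · intro h; exact absurd hnmem h
  rw [hl, coeff_zero] at hcoeffn
  have : algebraMap R K (l n) = 0 := by
    have h0 : l n • u n * w n = 0 := by rw [← hcoeffn, zero_mul]
    rw [Algebra.smul_def, mul_assoc, hunit, mul_one] at h0
    exact h0
  have : l n = 0 := hj (by rw [this, map_zero])
  exact (Finsupp.mem_support_iff.mp hnmem) this

theorem main_aux {O L : Type*} [CommRing O] [Field L] [Algebra O L]
    (α : ℕ → O)
    (hdist : ∀ i k : ℕ, i < k →
      algebraMap O L (α k) - algebraMap O L (α i) ≠ 0)
    (hints : ∀ (k : ℕ) (s : O), ∃ t : O, Polynomial.eval (algebraMap O L s)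
        (lagrangePoly (fun i => algebraMap O L (α i)) k) = algebraMap O L t)
    (R : Type*) [CommRing R] [Algebra O R]
    (hj : Function.Injective (algebraMap R (R ⊗[O] L))) :
    LinearIndependent R (fun k : ℕ =>
      ((lagrangePoly (fun i => algebraMap O L (α i)) k).map
        ((Algebra.TensorProduct.includeRight : L →ₐ[O] R ⊗[O] L) : L →+* _) :
        Polynomial (R ⊗[O] L))) ∧
    ∀ g : Polynomial (R ⊗[O] L),
      (∀ a : O, ∃ r : R,
        Polynomial.eval (algebraMap O (R ⊗[O] L) a) g = r ⊗ₜ[O] (1 : L)) ↔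
      g ∈ Submodule.span R (Set.range (fun k : ℕ =>
        ((lagrangePoly (fun i => algebraMap O L (α i)) k).map
          ((Algebra.TensorProduct.includeRight : L →ₐ[O] R ⊗[O] L) : L →+* _) :
          Polynomial (R ⊗[O] L)))) := by
  set K := R ⊗[O] L with hK
  set ι : L →+* K :=
    ((Algebra.TensorProduct.includeRight : L →ₐ[O] K) : L →+* K) with hι
  set β : ℕ → L := fun i => algebraMap O L (α i) with hβ
  set G : ℕ → Polynomial K := fun k => (lagrangePoly β k).map ι with hG
  -- basic facts about c
  have hc : ∀ k, (∏ i ∈ Finset.range k, (β k - β i)) ≠ 0 := by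
    intro k
    rw [Finset.prod_ne_zero_iff]
    intro i hi
    exact hdist i k (Finset.mem_range.mp hi)
  have heval : ∀ (k : ℕ) (x : L), Polynomial.eval x (lagrangePoly β k) =
      (∏ i ∈ Finset.range k, (x - β i)) * (∏ i ∈ Finset.range k, (β k - β i))⁻¹ := by
    intro k x; simp [lagrangePoly, eval_prod]
  have hfself : ∀ k, Polynomial.eval (β k) (lagrangePoly β k) = 1 := by
    intro k; rw [heval, mul_inv_cancel₀ (hc k)]
  have hflt : ∀ j k, j < k → Polynomial.eval (β j) (lagrangePoly β k) = 0 := by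
    intro j k hjk
    rw [heval]
    rw [Finset.prod_eq_zero (Finset.mem_range.mpr hjk) (sub_self (β j)), zero_mul]
  -- coefficient and degree facts
  have hfc : ∀ k, (lagrangePoly β k).coeff k =
      (∏ i ∈ Finset.range k, (β k - β i))⁻¹ := by
    intro k
    have hP : (∏ i ∈ Finset.range k, (X - C (β i))).Monic :=
      monic_prod_of_monic _ _ fun i _ => monic_X_sub_C _
    have hPdeg : (∏ i ∈ Finset.range k, (X - C (β i))).natDegree = k := by
      rw [natDegree_prod_of_monic _ _ fun i _ => monic_X_sub_C _]
      simp
    have h1 := hP.coeff_natDegree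
    rw [hPdeg] at h1
    rw [lagrangePoly, coeff_mul_C, h1, one_mul]
  have hGdeg : ∀ k, (G k).natDegree ≤ k := by
    intro k
    refine natDegree_map_le.trans ?_
    rw [lagrangePoly]
    refine natDegree_mul_le.trans ?_
    rw [natDegree_C, add_zero]
    refine (natDegree_prod_le _ _).trans ?_
    simp
  set u : ℕ → K := fun k => ι ((∏ i ∈ Finset.range k, (β k - β i))⁻¹) with hu
  set w : ℕ → K := fun k => ι (∏ i ∈ Finset.range k, (β k - β i)) with hw
  have hGcoeff : ∀ k, (G k).coeff k = u k := by
    intro k; rw [hG]; simp only [coeff_map, hfc]; rfl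
  have hunit : ∀ k, u k * w k = 1 := by
    intro k
    rw [hu, hw]
    simp only [← map_mul, inv_mul_cancel₀ (hc k), map_one]
  -- evaluation compatibility
  have heval_map : ∀ (q : Polynomial L) (a : O),
      Polynomial.eval (algebraMap O K a) (q.map ι) =
        ι (Polynomial.eval (algebraMap O L a) q) := by
    intro q a
    rw [show algebraMap O K a = ι (algebraMap O L a) from
      ((Algebra.TensorProduct.includeRight : L →ₐ[O] K).commutes a).symm]
    rw [eval_map, eval₂_at_apply]
  -- the submodule J
  set J : Submodule R K := LinearMap.range (Algebra.linearMap R K) with hJdef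
  have halg : ∀ r : R, algebraMap R K r = r ⊗ₜ[O] (1 : L) := fun r => rfl
  have hJ : ∀ x : K, (∃ r : R, x = r ⊗ₜ[O] (1 : L)) ↔ x ∈ J := by
    intro x
    constructor
    · rintro ⟨r, rfl⟩; exact ⟨r, (halg r)⟩
    · rintro ⟨r, rfl⟩; exact ⟨r, (halg r).symm⟩
  have hJmul : ∀ x ∈ J, ∀ t : O, x * ι (algebraMap O L t) ∈ J := by
    rintro _ ⟨r, rfl⟩ t
    refine ⟨t • r, ?_⟩
    simp only [Algebra.linearMap_apply, halg]
    show (t • r) ⊗ₜ[O] (1:L) = (r ⊗ₜ[O] (1:L)) * ((1:R) ⊗ₜ[O] (algebraMap O L t))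
    rw [Algebra.TensorProduct.tmul_mul_tmul, mul_one, one_mul,
      Algebra.algebraMap_eq_smul_one, TensorProduct.smul_tmul]
  have hspan : ∀ g : Polynomial K, g ∈ Submodule.span K (Set.range G) :=
    fun g => aux_span G u w hGdeg hGcoeff hunit g.natDegree g le_rfl
  constructor
  · exact aux_li hj G u w hGdeg hGcoeff hunit
  intro g
  constructor
  · intro hval
    obtain ⟨cF, hcF⟩ := Finsupp.mem_span_range_iff_exists_finsupp.mp (hspan g)
    have hck : ∀ k, cF k ∈ J := by
      intro k
      induction k using Nat.strong_induction_on with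
      | _ k IH =>
      by_cases hk : k ∈ cF.support
      · have hEv : Polynomial.eval (algebraMap O K (α k)) g ∈ J := (hJ _).mp (hval (α k))
        have hexp : Polynomial.eval (algebraMap O K (α k)) g
            = ∑ i ∈ cF.support, cF i * ι (Polynomial.eval (β k) (lagrangePoly β i)) := by
          rw [← hcF, Finsupp.sum, eval_finset_sum]
          refine Finset.sum_congr rfl fun i hi => ?_
          rw [eval_smul, hG, heval_map, smul_eq_mul]
        have hsplit : Polynomial.eval (algebraMap O K (α k)) g
            = cF k + ∑ i ∈ cF.support.erase k,
                cF i * ι (Polynomial.eval (β k) (lagrangePoly β i)) := by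
          rw [hexp, ← Finset.add_sum_erase _ _ hk, hfself k, map_one, mul_one]
        have hrest : (∑ i ∈ cF.support.erase k,
            cF i * ι (Polynomial.eval (β k) (lagrangePoly β i))) ∈ J := by
          refine Submodule.sum_mem _ fun i hi => ?_
          rcases lt_trichotomy i k with h | h | h
          · obtain ⟨t, ht⟩ := hints i (α k)
            rw [ht]
            exact hJmul _ (IH i h) t
          · exact absurd h (Finset.ne_of_mem_erase hi)
          · rw [hflt k i h, map_zero, mul_zero]
            exact Submodule.zero_mem _
        have : cF k = Polynomial.eval (algebraMap O K (α k)) g -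
            ∑ i ∈ cF.support.erase k,
              cF i * ι (Polynomial.eval (β k) (lagrangePoly β i)) := by
          rw [hsplit]; ring
        rw [this]
        exact Submodule.sub_mem _ hEv hrest
      · rw [Finsupp.notMem_support_iff.mp hk]
        exact Submodule.zero_mem _
    rw [← hcF, Finsupp.sum]
    refine Submodule.sum_mem _ fun i hi => ?_
    obtain ⟨r, hr⟩ := hck i
    rw [Algebra.linearMap_apply] at hr
    rw [← hr, algebraMap_smul]
    exact Submodule.smul_mem _ _ (Submodule.subset_span ⟨i, rfl⟩)
  · intro hg a
    rw [hJ]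
    have hone : (1 : K) ∈ J := ⟨1, by simp⟩
    refine Submodule.span_induction ?_ ?_ ?_ ?_ hg
    · rintro x ⟨k, rfl⟩
      rw [hG]
      simp only
      rw [heval_map]
      obtain ⟨t, ht⟩ := hints k a
      rw [ht]
      have := hJmul 1 hone t
      rwa [one_mul] at this
    · rw [eval_zero]; exact Submodule.zero_mem _
    · intro x y _ _ hx hy
      rw [eval_add]; exact Submodule.add_mem _ hx hy
    · intro r x _ hx
      rw [eval_smul]; exact Submodule.smul_mem _ _ hx

/-- Let `(α_k)` be a `π`-ordering of `o_L` with associated Lagrange polynomials `(f_k)`, and let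
`R` be a commutative `o_L`-algebra, torsion-free as `o_L`-module.  Then the images of the `f_k`
in `R_L[X] = (R ⊗_{o_L} L)[X]` form an `R`-module basis of
`Int(o_L, R) = { g ∈ R_L[X] : g(a) ∈ R for all a ∈ o_L }`: they are linearly independent over
`R`, and a polynomial `g ∈ R_L[X]` is `R`-valued on `o_L` iff it lies in their `R`-span. -/
theorem stmt11 (p : ℕ) [Fact p.Prime] (L : Type*) [Field L]
    [Algebra ℚ_[p] L] [FiniteDimensional ℚ_[p] L]
    [Algebra ℤ_[p] L] [IsScalarTower ℤ_[p] ℚ_[p] L]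
    (v : AddValuation L (WithTop ℤ))
    (hvO : ∀ x : L, 0 ≤ v x ↔ x ∈ integralClosure ℤ_[p] L)
    (π : L) (hπmem : π ∈ integralClosure ℤ_[p] L) (hvπ : v π = 1)
    (α : ℕ → integralClosure ℤ_[p] L)
    (hord : ∀ k : ℕ, 1 ≤ k → ∀ s : integralClosure ℤ_[p] L,
      v (∏ i ∈ Finset.range k, ((α k : L) - (α i : L))) ≤
        v (∏ i ∈ Finset.range k, ((s : L) - (α i : L))))
    (R : Type*) [CommRing R] [Algebra (integralClosure ℤ_[p] L) R]
    [NoZeroSMulDivisors (integralClosure ℤ_[p] L) R] :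
    LinearIndependent R (fun k : ℕ =>
      ((lagrangePoly (fun i => (α i : L)) k).map
        ((Algebra.TensorProduct.includeRight :
          L →ₐ[integralClosure ℤ_[p] L] R ⊗[integralClosure ℤ_[p] L] L) : L →+* _) :
        Polynomial (R ⊗[integralClosure ℤ_[p] L] L))) ∧
    ∀ g : Polynomial (R ⊗[integralClosure ℤ_[p] L] L),
      (∀ a : integralClosure ℤ_[p] L,
        ∃ r : R, Polynomial.eval
          (algebraMap (integralClosure ℤ_[p] L) (R ⊗[integralClosure ℤ_[p] L] L) a) g =
            r ⊗ₜ[integralClosure ℤ_[p] L] (1 : L)) ↔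
      g ∈ Submodule.span R (Set.range (fun k : ℕ =>
        ((lagrangePoly (fun i => (α i : L)) k).map
          ((Algebra.TensorProduct.includeRight :
            L →ₐ[integralClosure ℤ_[p] L] R ⊗[integralClosure ℤ_[p] L] L) : L →+* _) :
          Polynomial (R ⊗[integralClosure ℤ_[p] L] L)))) := by
  haveI : IsFractionRing (integralClosure ℤ_[p] L) L :=
    integralClosure.isFractionRing_of_finite_extension ℚ_[p] L

  haveI : CharZero L := charZero_of_injective_algebraMap (algebraMap ℚ_[p] L).injective
  haveI : Infinite (integralClosure ℤ_[p] L) := inferInstance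
  have htop : ∀ x : L, v x = ⊤ → x = 0 := by
    intro x hx
    by_contra h0
    have h := v.map_mul x x⁻¹
    rw [mul_inv_cancel₀ h0, v.map_one, hx, top_add] at h
    simp at h
  haveI := Classical.decEq (integralClosure ℤ_[p] L)
  have hdist : ∀ i k : ℕ, i < k →
      algebraMap (integralClosure ℤ_[p] L) L (α k)
        - algebraMap (integralClosure ℤ_[p] L) L (α i) ≠ 0 := by
    intro i k hik
    show ((α k : L) - (α i : L)) ≠ 0
    intro heq
    have hzero : (∏ j ∈ Finset.range k, ((α k : L) - (α j : L))) = 0 :=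
      Finset.prod_eq_zero (Finset.mem_range.mpr hik) heq
    obtain ⟨s, hs⟩ := Infinite.exists_notMem_finset ((Finset.range k).image α)
    have h1 := hord k (by omega) s
    rw [hzero, v.map_zero, top_le_iff] at h1
    have h2 : (∏ j ∈ Finset.range k, ((s : L) - (α j : L))) = 0 := htop _ h1
    have h3 : (∏ j ∈ Finset.range k, ((s : L) - (α j : L))) ≠ 0 := by
      rw [Finset.prod_ne_zero_iff]
      intro j hj
      refine sub_ne_zero.mpr ?_
      intro hsj
      exact hs (Finset.mem_image.mpr ⟨j, hj, (Subtype.coe_injective hsj).symm⟩)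
    exact h3 h2
  have hints : ∀ (k : ℕ) (s : integralClosure ℤ_[p] L),
      ∃ t : integralClosure ℤ_[p] L,
        Polynomial.eval (algebraMap (integralClosure ℤ_[p] L) L s)
          (lagrangePoly (fun i => algebraMap (integralClosure ℤ_[p] L) L (α i)) k)
          = algebraMap (integralClosure ℤ_[p] L) L t := by
    intro k s
    rcases Nat.eq_zero_or_pos k with hk | hk
    · refine ⟨1, ?_⟩
      subst hk
      simp [lagrangePoly]
    · have hc : (∏ i ∈ Finset.range k, ((α k : L) - (α i : L))) ≠ 0 := by
        rw [Finset.prod_ne_zero_iff]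
        intro i hi
        exact hdist i k (Finset.mem_range.mp hi)
      have heval : Polynomial.eval ((s : L))
          (lagrangePoly (fun i => ((α i : L))) k) =
          (∏ i ∈ Finset.range k, ((s:L) - (α i : L))) *
            (∏ i ∈ Finset.range k, ((α k : L) - (α i : L)))⁻¹ := by
        simp [lagrangePoly, eval_prod]
      have hmulid : Polynomial.eval ((s : L)) (lagrangePoly (fun i => ((α i : L))) k) *
          (∏ i ∈ Finset.range k, ((α k : L) - (α i : L)))
          = ∏ i ∈ Finset.range k, ((s:L) - (α i : L)) := by
        rw [heval, mul_assoc, inv_mul_cancel₀ hc, mul_one]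
      have hctop : v (∏ i ∈ Finset.range k, ((α k : L) - (α i : L))) ≠ ⊤ := by
        intro h
        exact hc (htop _ h)
      have hle := hord k hk s
      rw [← hmulid, v.map_mul] at hle
      have h0 : (0 : WithTop ℤ) + v (∏ i ∈ Finset.range k, ((α k : L) - (α i : L))) ≤
          v (Polynomial.eval ((s : L)) (lagrangePoly (fun i => ((α i : L))) k)) +
            v (∏ i ∈ Finset.range k, ((α k : L) - (α i : L))) := by
        rwa [zero_add]
      have h1 : (0 : WithTop ℤ) ≤
          v (Polynomial.eval ((s : L)) (lagrangePoly (fun i => ((α i : L))) k)) :=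
        (WithTop.add_le_add_iff_right hctop).mp h0
      exact ⟨⟨_, (hvO _).mp h1⟩, rfl⟩
  have hj : Function.Injective
      (algebraMap R (R ⊗[integralClosure ℤ_[p] L] L)) := jinj
  exact main_aux α hdist hints R hj
end

section
/- Let R be a valuation ring with fraction field Frac(R), let m ≥ n ≥ 1, and let A be an m × n matrix with entries in R whose rank (as a matrix over Frac(R)) equals n. Then there exists an invertible matrix U ∈ GL_m(R) (a product of elementary row-operation matrices) such that the matrix UA is upper-triangular, i.e. (UA)_{ij} = 0 whenever i > j, and UA still has rank n. -/
open Matrix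

lemma stmt14_exists_dvd_min {R : Type*} [CommRing R] [IsDomain R] [ValuationRing R] {ι : Type*}
    (s : Finset ι) (hs : s.Nonempty) (f : ι → R) : ∃ i ∈ s, ∀ j ∈ s, f i ∣ f j := by
  classical
  induction s using Finset.induction_on with
  | empty => simp at hs
  | @insert a s ha ih =>
    by_cases h : s.Nonempty
    · obtain ⟨i, hi, hmin⟩ := ih h
      rcases ValuationRing.dvd_total (f a) (f i) with hd | hd
      · exact ⟨a, Finset.mem_insert_self _ _, fun j hj => by
          rcases Finset.mem_insert.mp hj with rfl | hj
          · exact dvd_rfl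
          · exact hd.trans (hmin j hj)⟩
      · exact ⟨i, Finset.mem_insert_of_mem hi, fun j hj => by
          rcases Finset.mem_insert.mp hj with rfl | hj
          · exact hd
          · exact hmin j hj⟩
    · rw [Finset.not_nonempty_iff_eq_empty] at h
      subst h
      exact ⟨a, Finset.mem_insert_self _ _, fun j hj => by
        rcases Finset.mem_insert.mp hj with rfl | hj
        · exact dvd_rfl
        · simp at hj⟩

lemma stmt14_aux {R : Type*} [CommRing R] [IsDomain R] [ValuationRing R]
    (m n : ℕ) (hmn : n ≤ m) (d : ℕ) : ∀ (k : ℕ), n ≤ k + d →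
    ∀ A : Matrix (Fin m) (Fin n) R,
    (∀ (i : Fin m) (j : Fin n), (j : ℕ) < (i : ℕ) → (j : ℕ) < k → A i j = 0) →
    ∃ U : Matrix (Fin m) (Fin m) R, IsUnit U ∧
      ∀ (i : Fin m) (j : Fin n), (j : ℕ) < (i : ℕ) → (U * A) i j = 0 := by
  classical
  induction d with
  | zero =>
    intro k hk A hA
    refine ⟨1, isUnit_one, fun i j hji => ?_⟩
    rw [Matrix.one_mul]
    exact hA i j hji (lt_of_lt_of_le j.isLt (by omega))
  | succ d ih =>
    intro k hk A hA
    by_cases hkn : n ≤ k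
    · refine ⟨1, isUnit_one, fun i j hji => ?_⟩
      rw [Matrix.one_mul]
      exact hA i j hji (lt_of_lt_of_le j.isLt hkn)
    push_neg at hkn
    set kn : Fin n := ⟨k, hkn⟩ with hkn_def
    set km : Fin m := ⟨k, lt_of_lt_of_le hkn hmn⟩ with hkm_def
    -- step 1: find a dvd-minimal entry in column kn among rows ≥ k
    obtain ⟨i0, hi0mem, hi0⟩ := stmt14_exists_dvd_min
      (Finset.univ.filter (fun i : Fin m => k ≤ (i : ℕ)))
      ⟨km, by simp [hkm_def]⟩ (fun i => A i kn)
    have hi0k : k ≤ (i0 : ℕ) := by simpa using hi0mem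
    have hi0dvd : ∀ i : Fin m, k ≤ (i : ℕ) → A i0 kn ∣ A i kn := fun i hi =>
      hi0 i (by simpa using hi)
    -- step 2: swap rows km and i0
    set σ : Equiv.Perm (Fin m) := Equiv.swap km i0 with hσ_def
    have hσcases : ∀ i : Fin m, k ≤ ((σ i : Fin m) : ℕ) ∨ σ i = i := by
      intro i
      by_cases h1 : i = km
      · left; rw [h1, hσ_def, Equiv.swap_apply_left]; exact hi0k
      by_cases h2 : i = i0
      · left; rw [h2, hσ_def, Equiv.swap_apply_right]
      · right; exact Equiv.swap_apply_of_ne_of_ne h1 h2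
    have hσlt : ∀ (i : Fin m) (j : ℕ), j < i → j < k → j < ((σ i : Fin m) : ℕ) := by
      intro i j hji hjk
      rcases hσcases i with h | h
      · omega
      · rw [h]; exact hji
    have hσge : ∀ i : Fin m, k ≤ (i : ℕ) → k ≤ ((σ i : Fin m) : ℕ) := by
      intro i hi
      rcases hσcases i with h | h
      · exact h
      · rw [h]; exact hi
    set B : Matrix (Fin m) (Fin n) R := A.submatrix σ id with hB_def
    have hBapp : ∀ (i : Fin m) (j : Fin n), B i j = A (σ i) j := fun i j => rfl
    have hB0 : ∀ (i : Fin m) (j : Fin n), (j : ℕ) < (i : ℕ) → (j : ℕ) < k → B i j = 0 := by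
      intro i j hji hjk
      rw [hBapp]
      exact hA (σ i) j (hσlt i j hji hjk) hjk
    have hBkm : B km kn = A i0 kn := by
      rw [hBapp, hσ_def, Equiv.swap_apply_left]
    have hBdvd : ∀ i : Fin m, k < (i : ℕ) → ∃ t : R, B i kn = B km kn * t := by
      intro i hi
      rw [hBkm, hBapp]
      exact (hi0dvd (σ i) (hσge i (le_of_lt hi)))
    -- step 3: eliminate below (km, kn)
    set c : Fin m → R := fun i => if h : k < (i : ℕ) then (hBdvd i h).choose else 0 with hc_def
    have hc_spec : ∀ i : Fin m, k < (i : ℕ) → B i kn = B km kn * c i := by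
      intro i hi
      rw [hc_def]
      simp only [dif_pos hi]
      exact (hBdvd i hi).choose_spec
    set N : Matrix (Fin m) (Fin m) R :=
      Matrix.of (fun i j => if j = km ∧ k < (i : ℕ) then -(c i) else 0) with hN_def
    have hNsq : N * N = 0 := by
      ext i j
      rw [Matrix.mul_apply]
      apply Finset.sum_eq_zero
      intro l _
      by_cases hl : l = km
      · subst hl
        have : N km j = 0 := by
          rw [hN_def]; simp only [Matrix.of_apply, hkm_def]
          rw [if_neg]; rintro ⟨-, h⟩; omega
        rw [this, mul_zero]
      · have : N i l = 0 := by
          rw [hN_def]; simp only [Matrix.of_apply]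
          rw [if_neg]; rintro ⟨h, -⟩; exact hl h
        rw [this, zero_mul]
    have hEunit : IsUnit (1 + N) := by
      refine ⟨⟨1 + N, 1 - N, ?_, ?_⟩, rfl⟩
      · rw [mul_sub, mul_one, add_mul, one_mul, hNsq, add_zero, add_sub_cancel_right]
      · rw [mul_add, mul_one, sub_mul, one_mul, hNsq, sub_zero, sub_add_cancel]
    have hNB : ∀ (i : Fin m) (j : Fin n), (N * B) i j
        = if k < (i : ℕ) then -(c i) * B km j else 0 := by
      intro i j
      rw [Matrix.mul_apply]
      rw [Finset.sum_eq_single km]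
      · rw [hN_def]
        simp only [Matrix.of_apply, true_and]
        split_ifs with h <;> simp
      · intro l _ hl
        have : N i l = 0 := by
          rw [hN_def]; simp only [Matrix.of_apply]
          rw [if_neg]; rintro ⟨h, -⟩; exact hl h
        rw [this, zero_mul]
      · simp
    set C : Matrix (Fin m) (Fin n) R := (1 + N) * B with hC_def
    have hCapp : ∀ (i : Fin m) (j : Fin n), C i j
        = B i j + if k < (i : ℕ) then -(c i) * B km j else 0 := by
      intro i j
      rw [hC_def, Matrix.add_mul, Matrix.one_mul, Matrix.add_apply, hNB]
    have hC0 : ∀ (i : Fin m) (j : Fin n), (j : ℕ) < (i : ℕ) → (j : ℕ) < k + 1 → C i j = 0 := by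
      intro i j hji hjk
      rw [hCapp]
      rcases Nat.lt_succ_iff_lt_or_eq.mp hjk with hjk | hjk
      · rw [hB0 i j hji hjk, hB0 km j (by simp [hkm_def]; omega) hjk]
        simp
      · have hj : j = kn := Fin.ext hjk
        subst hj
        have hki : k < (i : ℕ) := hji
        rw [if_pos hki, hc_spec i hki]
        ring
    obtain ⟨U', hU'unit, hU'⟩ := ih (k + 1) (by omega) C hC0
    refine ⟨U' * ((1 + N) * σ.permMatrix R), ?_, ?_⟩
    · exact (hU'unit.mul (hEunit.mul (by
        rw [Matrix.isUnit_iff_isUnit_det, Matrix.det_permutation]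
        rcases Int.units_eq_one_or (Equiv.Perm.sign σ) with h | h <;> simp [h])))
    · intro i j hji
      have : U' * ((1 + N) * σ.permMatrix R) * A = U' * C := by
        rw [hC_def, hB_def, ← PEquiv.toMatrix_toPEquiv_mul]
        simp only [Matrix.mul_assoc]
      rw [this]
      exact hU' i j hji

/-- Let `R` be a valuation ring with fraction field `Frac(R)`, let `m ≥ n ≥ 1`, and let `A` be an
`m × n` matrix over `R` whose rank over `Frac(R)` equals `n`. Then there is an invertible matrix
`U ∈ GL_m(R)` such that `U * A` is upper-triangular (i.e. `(UA)_{ij} = 0` whenever `i > j`) and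
`U * A` still has rank `n`. -/
theorem stmt14 (R : Type*) [CommRing R] [IsDomain R] [ValuationRing R]
    (m n : ℕ) (hn : 1 ≤ n) (hmn : n ≤ m)
    (A : Matrix (Fin m) (Fin n) R)
    (hA : (A.map (algebraMap R (FractionRing R))).rank = n) :
    ∃ U : Matrix (Fin m) (Fin m) R, IsUnit U ∧
      (∀ (i : Fin m) (j : Fin n), (j : ℕ) < (i : ℕ) → (U * A) i j = 0) ∧
      ((U * A).map (algebraMap R (FractionRing R))).rank = n := by
  obtain ⟨U, hU, hUA⟩ := stmt14_aux m n hmn n 0 (by omega) A (by omega)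
  refine ⟨U, hU, hUA, ?_⟩
  set f := algebraMap R (FractionRing R)
  have h1 : (U * A).map f = U.map f * A.map f := Matrix.map_mul
  rw [h1]
  have h2 : IsUnit (U.map f) := by
    have := hU.map (RingHom.mapMatrix (f := f) : Matrix (Fin m) (Fin m) R →+* _)
    simpa using this
  rw [Matrix.rank_mul_eq_right_of_isUnit_det _ _ ((Matrix.isUnit_iff_isUnit_det _).mp h2)]
  exact hA
end

section
/- Let S be a commutative o_L-algebra that is π-adically complete and separated. Call an S-linear functional λ : S⟦Z⟧ → S continuous if for every n ≥ 0 there exists m ≥ 0 such that λ maps the ideal (π, Z)^m of S⟦Z⟧ into π^n S. Then the map sending a π-adic null sequence (a_m)_{m≥0} in S (i.e. a_m → 0 π-adically) to the functional F ↦ Σ_{m≥0} a_m·(coefficient of Z^m in F) is well-defined (the series converges in S), and it is a bijection from the set of π-adic null sequences in S onto the set of continuous S-linear functionals on S⟦Z⟧. -/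
open PowerSeries

namespace Stmt16Aux

variable {S : Type*} [CommRing S]

/-- Partial sums of the series `Σ a_m · coeff_m F`. -/
noncomputable def psum (a : ℕ → S) (F : PowerSeries S) (K : ℕ) : S :=
  ∑ m ∈ Finset.range K, a m * PowerSeries.coeff m F

/-- `l` is the `t`-adic limit of the partial sums `Σ_{m<K} a_m · coeff_m F`. -/
def IsLim (t : S) (a : ℕ → S) (F : PowerSeries S) (l : S) : Prop :=
  ∀ n : ℕ, ∃ N : ℕ, ∀ K ≥ N, l - psum a F K ∈ (Ideal.span {t}) ^ n

/-- `a` is a `t`-adic null sequence. -/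
def IsNull (t : S) (a : ℕ → S) : Prop :=
  ∀ n : ℕ, ∃ N : ℕ, ∀ m ≥ N, a m ∈ (Ideal.span {t}) ^ n

variable (t : S)

lemma mem_smul_top_iff (n : ℕ) (x : S) :
    x ∈ (Ideal.span {t}) ^ n • (⊤ : Submodule S S) ↔ x ∈ (Ideal.span {t}) ^ n := by
  rw [Ideal.smul_eq_mul, Ideal.mul_top]

lemma psum_sub {a : ℕ → S} {F : PowerSeries S} {K K' : ℕ} (h : K ≤ K') :
    psum a F K' - psum a F K = ∑ m ∈ Finset.Ico K K', a m * PowerSeries.coeff m F := by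
  rw [psum, psum, Finset.sum_Ico_eq_sub _ h]

lemma isLim_exists [IsAdicComplete (Ideal.span {t}) S] {a : ℕ → S} (ha : IsNull t a)
    (F : PowerSeries S) : ∃ l, IsLim t a F l := by
  choose Nf hNf using ha
  set N' : ℕ → ℕ := fun n => (Finset.range (n + 1)).sup Nf with hN'def
  have hN'le : ∀ n, Nf n ≤ N' n := fun n =>
    Finset.le_sup (Finset.self_mem_range_succ n)
  have hN'mono : Monotone N' := fun m n h =>
    Finset.sup_mono (Finset.range_subset_range.2 (by omega))
  have key : ∀ n K K', N' n ≤ K → K ≤ K' →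
      psum a F K' - psum a F K ∈ (Ideal.span {t}) ^ n := by
    intro n K K' hK hKK'
    rw [psum_sub hKK']
    refine Ideal.sum_mem _ fun m hm => Ideal.mul_mem_right _ _ ?_
    exact hNf n m (le_trans (le_trans (hN'le n) hK) (Finset.mem_Ico.1 hm).1)
  obtain ⟨l, hl⟩ := IsPrecomplete.prec (I := Ideal.span {t})
    (IsAdicComplete.toIsPrecomplete)
    (f := fun n => psum a F (N' n)) (by
      intro m n hmn
      rw [SModEq.sub_mem, mem_smul_top_iff]
      have := key m (N' m) (N' n) le_rfl (hN'mono hmn)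
      simpa using neg_mem this)
  refine ⟨l, fun n => ⟨N' n, fun K hK => ?_⟩⟩
  have h1 : l - psum a F (N' n) ∈ (Ideal.span {t}) ^ n := by
    have := hl n
    rw [SModEq.sub_mem, mem_smul_top_iff] at this
    simpa using neg_mem this
  have h2 := key n (N' n) K le_rfl hK
  have heq : l - psum a F K = (l - psum a F (N' n)) - (psum a F K - psum a F (N' n)) := by ring
  rw [heq]
  exact sub_mem h1 h2

lemma isLim_unique [IsAdicComplete (Ideal.span {t}) S] {a : ℕ → S} {F : PowerSeries S}
    {l l' : S} (h : IsLim t a F l) (h' : IsLim t a F l') : l = l' := by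
  rw [← sub_eq_zero]
  refine IsHausdorff.haus (I := Ideal.span {t}) (IsAdicComplete.toIsHausdorff) _ fun n => ?_
  rw [SModEq.zero, mem_smul_top_iff]
  obtain ⟨N, hN⟩ := h n
  obtain ⟨N', hN'⟩ := h' n
  have := sub_mem (hN (max N N') (le_max_left _ _)) (hN' (max N N') (le_max_right _ _))
  simpa using this

/-- The sum of the series `Σ a_m coeff_m F`, obtained from `t`-adic completeness. -/
noncomputable def limFun [IsAdicComplete (Ideal.span {t}) S] {a : ℕ → S} (ha : IsNull t a)
    (F : PowerSeries S) : S := (isLim_exists t ha F).choose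

lemma limFun_isLim [IsAdicComplete (Ideal.span {t}) S] {a : ℕ → S} (ha : IsNull t a)
    (F : PowerSeries S) : IsLim t a F (limFun t ha F) := (isLim_exists t ha F).choose_spec

lemma isLim_add {a : ℕ → S} {F G : PowerSeries S} {l l' : S}
    (h : IsLim t a F l) (h' : IsLim t a G l') : IsLim t a (F + G) (l + l') := by
  intro n
  obtain ⟨N, hN⟩ := h n
  obtain ⟨N', hN'⟩ := h' n
  refine ⟨max N N', fun K hK => ?_⟩
  have h1 : psum a (F + G) K = psum a F K + psum a G K := by
    simp [psum, mul_add, Finset.sum_add_distrib]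
  rw [h1]
  have h2 : l + l' - (psum a F K + psum a G K) = (l - psum a F K) + (l' - psum a G K) := by ring
  rw [h2]
  exact add_mem (hN K (le_trans (le_max_left _ _) hK)) (hN' K (le_trans (le_max_right _ _) hK))

lemma isLim_smul {a : ℕ → S} {F : PowerSeries S} {l : S} (c : S)
    (h : IsLim t a F l) : IsLim t a (c • F) (c * l) := by
  intro n
  obtain ⟨N, hN⟩ := h n
  refine ⟨N, fun K hK => ?_⟩
  have h1 : psum a (c • F) K = c * psum a F K := by
    simp only [psum, Finset.mul_sum, coeff_smul, smul_eq_mul]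
    exact Finset.sum_congr rfl fun m _ => by ring
  rw [h1, ← mul_sub]
  exact Ideal.mul_mem_left _ _ (hN K hK)

/-- The linear functional attached to a null sequence. -/
noncomputable def limMap [IsAdicComplete (Ideal.span {t}) S] {a : ℕ → S} (ha : IsNull t a) :
    PowerSeries S →ₗ[S] S where
  toFun := limFun t ha
  map_add' F G := isLim_unique t (limFun_isLim t ha (F + G))
    (isLim_add t (limFun_isLim t ha F) (limFun_isLim t ha G))
  map_smul' c F := isLim_unique t (limFun_isLim t ha (c • F))
    (isLim_smul t c (limFun_isLim t ha F))

lemma coeff_mul_mem_aux {y : PowerSeries S} {m : ℕ}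
    (hy : ∀ j, coeff j y ∈ (Ideal.span {t}) ^ (m - j)) (u : PowerSeries S) (k : ℕ) :
    coeff k (y * u) ∈ (Ideal.span {t}) ^ (m - k) := by
  rw [coeff_mul]
  refine Ideal.sum_mem _ fun p hp => Ideal.mul_mem_right _ _ ?_
  have h1 : p.1 ≤ k := by
    have := Finset.HasAntidiagonal.antidiagonal.fst_le hp
    omega
  exact Ideal.pow_le_pow_right (Nat.sub_le_sub_left h1 m) (hy p.1)

lemma coeff_mem_of_mem_pow (m : ℕ) :
    ∀ F ∈ (Ideal.span {C t, (X : PowerSeries S)}) ^ m, ∀ k,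
      coeff k F ∈ (Ideal.span {t}) ^ (m - k) := by
  induction m with
  | zero => intro F _ k; simpa using Submodule.mem_top
  | succ m ih =>
    intro F hF
    rw [pow_succ] at hF
    refine Submodule.mul_induction_on hF ?_ ?_
    · intro y hy x hx k
      obtain ⟨u, v, huv⟩ := Ideal.mem_span_pair.1 hx
      have hyj : ∀ j, coeff j y ∈ (Ideal.span {t}) ^ (m - j) := ih y hy
      have h1 : coeff k (y * (u * C t)) ∈ (Ideal.span {t}) ^ (m + 1 - k) := by
        have heq : y * (u * C t) = (y * u) * C t := by ring
        rw [heq, coeff_mul_C]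
        have hmem : coeff k (y * u) * t ∈ (Ideal.span {t}) ^ (m - k + 1) := by
          rw [pow_succ]
          exact Ideal.mul_mem_mul (coeff_mul_mem_aux t hyj u k) (Ideal.subset_span rfl)
        exact Ideal.pow_le_pow_right (by omega) hmem
      have h2 : coeff k (y * (v * X)) ∈ (Ideal.span {t}) ^ (m + 1 - k) := by
        have heq : y * (v * X) = (y * v) * X := by ring
        rw [heq]
        cases k with
        | zero => rw [coeff_zero_mul_X]; exact zero_mem _
        | succ k =>
          rw [coeff_succ_mul_X]
          have heq2 : m + 1 - (k + 1) = m - k := by omega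
          rw [heq2]
          exact coeff_mul_mem_aux t hyj v k
      have heq3 : coeff k (y * x) =
          coeff k (y * (u * C t)) + coeff k (y * (v * X)) := by
        rw [← map_add, ← mul_add, huv]
      rw [heq3]
      exact add_mem h1 h2
    · intro F G hF hG k
      rw [map_add]
      exact add_mem (hF k) (hG k)

lemma limFun_cont [IsAdicComplete (Ideal.span {t}) S] {a : ℕ → S} (ha : IsNull t a) (n : ℕ) :
    ∃ m, ∀ F ∈ (Ideal.span {C t, (X : PowerSeries S)}) ^ m,
      limFun t ha F ∈ (Ideal.span {t}) ^ n := by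
  obtain ⟨N, hN⟩ := ha n
  refine ⟨n + N, fun F hF => ?_⟩
  have hps : ∀ K, psum a F K ∈ (Ideal.span {t}) ^ n := by
    intro K
    refine Ideal.sum_mem _ fun m _ => ?_
    by_cases h : N ≤ m
    · exact Ideal.mul_mem_right _ _ (hN m h)
    · refine Ideal.mul_mem_left _ _ ?_
      exact Ideal.pow_le_pow_right (by omega) (coeff_mem_of_mem_pow t (n + N) F hF m)
  obtain ⟨K0, hK0⟩ := limFun_isLim t ha F n
  have := add_mem (hK0 K0 le_rfl) (hps K0)
  simpa using this

lemma psum_X_pow (a : ℕ → S) (m K : ℕ) (h : m < K) :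
    psum a ((X : PowerSeries S) ^ m) K = a m := by
  rw [psum]
  simp only [coeff_X_pow, mul_ite, mul_one, mul_zero]
  rw [Finset.sum_ite_eq' (Finset.range K) m a]
  simp [h]

lemma isLim_X_pow (a : ℕ → S) (m : ℕ) : IsLim t a ((X : PowerSeries S) ^ m) (a m) :=
  fun n => ⟨m + 1, fun K hK => by
    rw [psum_X_pow a m K (by omega), sub_self]; exact zero_mem _⟩

lemma X_pow_mem_J_pow (K : ℕ) :
    (X : PowerSeries S) ^ K ∈ (Ideal.span {C t, (X : PowerSeries S)}) ^ K :=
  Ideal.pow_mem_pow (Ideal.subset_span (by simp)) K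

lemma sub_trunc_mem (F : PowerSeries S) (K : ℕ) :
    F - ∑ m ∈ Finset.range K, (coeff m F) • (X : PowerSeries S) ^ m ∈
      (Ideal.span {C t, (X : PowerSeries S)}) ^ K := by
  have hdvd : (X : PowerSeries S) ^ K ∣
      F - ∑ m ∈ Finset.range K, (coeff m F) • (X : PowerSeries S) ^ m := by
    rw [X_pow_dvd_iff]
    intro j hj
    rw [map_sub, map_sum]
    simp only [coeff_smul, coeff_X_pow, smul_eq_mul, mul_ite, mul_one, mul_zero]
    rw [Finset.sum_ite_eq (Finset.range K) j (fun m => coeff m F)]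
    simp [hj]
  obtain ⟨G, hG⟩ := hdvd
  rw [hG]
  exact Ideal.mul_mem_right _ _ (X_pow_mem_J_pow t K)

lemma psum_eq_apply (l : PowerSeries S →ₗ[S] S) (F : PowerSeries S) (K : ℕ) :
    psum (fun m => l ((X : PowerSeries S) ^ m)) F K =
      l (∑ m ∈ Finset.range K, (coeff m F) • (X : PowerSeries S) ^ m) := by
  rw [map_sum, psum]
  exact Finset.sum_congr rfl fun m _ => by rw [map_smul, smul_eq_mul, mul_comm]

lemma null_of_cont (l : PowerSeries S →ₗ[S] S)
    (hl : ∀ n : ℕ, ∃ m : ℕ, ∀ F ∈ (Ideal.span {C t, (X : PowerSeries S)}) ^ m,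
      l F ∈ (Ideal.span {t}) ^ n) :
    IsNull t (fun m => l ((X : PowerSeries S) ^ m)) := by
  intro n
  obtain ⟨m, hm⟩ := hl n
  refine ⟨m, fun k hk => ?_⟩
  refine hm _ ?_
  have heq : (X : PowerSeries S) ^ k = X ^ m * X ^ (k - m) := by
    rw [← pow_add]; congr 1; omega
  rw [heq]
  exact Ideal.mul_mem_right _ _ (X_pow_mem_J_pow t m)

lemma isLim_of_cont (l : PowerSeries S →ₗ[S] S)
    (hl : ∀ n : ℕ, ∃ m : ℕ, ∀ F ∈ (Ideal.span {C t, (X : PowerSeries S)}) ^ m,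
      l F ∈ (Ideal.span {t}) ^ n) (F : PowerSeries S) :
    IsLim t (fun m => l ((X : PowerSeries S) ^ m)) F (l F) := by
  intro n
  obtain ⟨m, hm⟩ := hl n
  refine ⟨m, fun K hK => ?_⟩
  rw [psum_eq_apply, ← map_sub]
  exact hm _ (Ideal.pow_le_pow_right hK (sub_trunc_mem t F K))

end Stmt16Aux

/-- Let `o_L` be the ring of integers of a finite extension `L/ℚ_p` with uniformizer `π`, and
let `S` be a commutative `o_L`-algebra, `π`-adically complete and separated.  Call an `S`-linear
functional `λ : S⟦Z⟧ → S` continuous if for every `n` there is `m` with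
`λ((π,Z)^m) ⊆ π^n S`.  Then the map sending a `π`-adic null sequence `(a_m)` in `S` to the
functional `F ↦ Σ_{m≥0} a_m·(coeff of Z^m in F)` (the series converging `π`-adically in `S`)
is well-defined and a bijection from the null sequences onto the continuous `S`-linear
functionals on `S⟦Z⟧`.  This is expressed below by the existence of a bijection `Φ` such that
`Φ(a)(F)` is the `π`-adic limit of the partial sums `Σ_{m<N} a_m·coeff_m(F)`. -/

theorem stmt16 (p : ℕ) [Fact p.Prime] (L : Type*) [Field L]
    [Algebra ℚ_[p] L] [FiniteDimensional ℚ_[p] L]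
    [Algebra ℤ_[p] L] [IsScalarTower ℤ_[p] ℚ_[p] L]
    (π : L) (hπmem : π ∈ integralClosure ℤ_[p] L)
    (hirr : Irreducible (⟨π, hπmem⟩ : integralClosure ℤ_[p] L))
    (S : Type*) [CommRing S] [Algebra (integralClosure ℤ_[p] L) S]
    [IsAdicComplete (Ideal.span
      {algebraMap (integralClosure ℤ_[p] L) S ⟨π, hπmem⟩}) S] :
    ∃ Φ : {a : ℕ → S // ∀ n : ℕ, ∃ N : ℕ, ∀ m ≥ N,
          a m ∈ (Ideal.span {algebraMap (integralClosure ℤ_[p] L) S ⟨π, hπmem⟩}) ^ n} →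
        {l : PowerSeries S →ₗ[S] S // ∀ n : ℕ, ∃ m : ℕ,
          ∀ F ∈ (Ideal.span {PowerSeries.C
              (algebraMap (integralClosure ℤ_[p] L) S ⟨π, hπmem⟩),
            (PowerSeries.X : PowerSeries S)}) ^ m,
          l F ∈ (Ideal.span {algebraMap (integralClosure ℤ_[p] L) S ⟨π, hπmem⟩}) ^ n},
      Function.Bijective Φ ∧
        ∀ a F (n : ℕ), ∃ N₀ : ℕ, ∀ N ≥ N₀,
          (Φ a).1 F - ∑ m ∈ Finset.range N, a.1 m * PowerSeries.coeff m F ∈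
            (Ideal.span {algebraMap (integralClosure ℤ_[p] L) S ⟨π, hπmem⟩}) ^ n := by
  set t : S := algebraMap (integralClosure ℤ_[p] L) S ⟨π, hπmem⟩ with ht
  refine ⟨fun a => ⟨Stmt16Aux.limMap t a.2, Stmt16Aux.limFun_cont t a.2⟩, ⟨?_, ?_⟩, ?_⟩
  · -- injective
    intro a b h
    have h' : ∀ F, Stmt16Aux.limFun t a.2 F = Stmt16Aux.limFun t b.2 F := fun F =>
      DFunLike.congr_fun (congrArg Subtype.val h) F
    refine Subtype.ext (funext fun m => ?_)
    have ha' : a.1 m = Stmt16Aux.limFun t a.2 ((PowerSeries.X : PowerSeries S) ^ m) :=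
      Stmt16Aux.isLim_unique t (Stmt16Aux.isLim_X_pow t a.1 m)
        (Stmt16Aux.limFun_isLim t a.2 _)
    have hb' : b.1 m = Stmt16Aux.limFun t b.2 ((PowerSeries.X : PowerSeries S) ^ m) :=
      Stmt16Aux.isLim_unique t (Stmt16Aux.isLim_X_pow t b.1 m)
        (Stmt16Aux.limFun_isLim t b.2 _)
    rw [ha', hb', h']
  · -- surjective
    intro l
    refine ⟨⟨fun m => l.1 ((PowerSeries.X : PowerSeries S) ^ m),
      Stmt16Aux.null_of_cont t l.1 l.2⟩, ?_⟩
    refine Subtype.ext (LinearMap.ext fun F => ?_)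
    exact Stmt16Aux.isLim_unique t
      (Stmt16Aux.limFun_isLim t (Stmt16Aux.null_of_cont t l.1 l.2) F)
      (Stmt16Aux.isLim_of_cont t l.1 l.2 F)
  · intro a F n
    exact Stmt16Aux.limFun_isLim t a.2 F n
end

section
/- Let S be a commutative ring, π ∈ S, and let 𝔪 denote the ideal (π, Z) of A := S⟦Z⟧. Let g ∈ S⟦Z⟧ satisfy g ∈ Z·𝔪 (in particular g has zero constant term), and let φ : A → A be the substitution endomorphism F ↦ F(g). Then for every n ≥ 0 the n-fold iterate satisfies φ^n(Z) ∈ Z·𝔪^n, and consequently for any sequence (a_n)_{n≥0} of elements of Z·A one has φ^n(a_n) ∈ 𝔪^{n+1} for all n; in particular φ^n(a_n) → 0 in the 𝔪-adic topology on A. -/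
open PowerSeries
set_option maxHeartbeats 1000000

/-- Let `S` be a commutative ring, `π ∈ S`, and let `𝔪` denote the ideal `(π, Z)` of
`A := S⟦Z⟧`.  Let `g ∈ S⟦Z⟧` satisfy `g ∈ Z·𝔪`, and let `φ : A → A` be the substitution
endomorphism `F ↦ F(g)` (a ring endomorphism fixing constants and sending `Z` to `g`).
Then for every `n ≥ 0` the `n`-fold iterate satisfies `φ^n(Z) ∈ Z·𝔪^n`, and consequently
for any sequence `(a_n)` of elements of `Z·A` one has `φ^n(a_n) ∈ 𝔪^{n+1}` for all `n`;
in particular `φ^n(a_n) → 0` in the `𝔪`-adic topology on `A`. -/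
theorem stmt17 (S : Type*) [CommRing S] (π : S) (g : PowerSeries S)
    (hg : g ∈ Ideal.span {(PowerSeries.X : PowerSeries S)} *
      Ideal.span {PowerSeries.C π, PowerSeries.X})
    (φ : PowerSeries S →+* PowerSeries S)
    (hφX : φ PowerSeries.X = g)
    (hφC : ∀ s : S, φ (PowerSeries.C s) = PowerSeries.C s) :
    (∀ n : ℕ, (⇑φ)^[n] PowerSeries.X ∈ Ideal.span {(PowerSeries.X : PowerSeries S)} *
        (Ideal.span {PowerSeries.C π, PowerSeries.X}) ^ n) ∧
      (∀ a : ℕ → PowerSeries S, (∀ n, a n ∈ Ideal.span {(PowerSeries.X : PowerSeries S)}) →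
        ∀ n : ℕ, (⇑φ)^[n] (a n) ∈ (Ideal.span {PowerSeries.C π, PowerSeries.X}) ^ (n + 1)) ∧
      ∀ a : ℕ → PowerSeries S, (∀ n, a n ∈ Ideal.span {(PowerSeries.X : PowerSeries S)}) →
        ∀ k : ℕ, ∃ N : ℕ, ∀ n ≥ N,
          (⇑φ)^[n] (a n) ∈ (Ideal.span {PowerSeries.C π, PowerSeries.X}) ^ k := by
  set Z : PowerSeries S := PowerSeries.X
  set I : Ideal (PowerSeries S) := Ideal.span {PowerSeries.C π, PowerSeries.X} with hI
  set J : Ideal (PowerSeries S) := Ideal.span {Z} with hJ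
  have hZI : J ≤ I := by
    rw [hJ, Ideal.span_le]
    intro x hx
    simp only [Set.mem_singleton_iff] at hx
    subst hx
    exact Ideal.subset_span (by simp [Z])
  have hmapJ : Ideal.map φ J ≤ J * I := by
    rw [hJ, Ideal.map_span, Set.image_singleton, Ideal.span_le]
    intro x hx
    simp only [Set.mem_singleton_iff] at hx
    subst hx
    rw [hφX]; exact hg
  have hmapI : Ideal.map φ I ≤ I := by
    rw [hI, Ideal.map_span, Ideal.span_le]
    rintro x ⟨y, hy, rfl⟩
    rcases hy with rfl | rfl
    · rw [hφC]; exact Ideal.subset_span (by simp)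
    · rw [hφX]
      exact Ideal.mul_le_right (I := J) (J := I) hg
  -- main induction
  have key : ∀ n : ℕ, (⇑φ)^[n] Z ∈ J * I ^ n := by
    intro n
    induction n with
    | zero =>
      rw [Function.iterate_zero_apply, pow_zero, mul_one]
      exact Ideal.mem_span_singleton_self Z
    | succ n ih =>
      rw [Function.iterate_succ_apply']
      have h1 : φ ((⇑φ)^[n] Z) ∈ Ideal.map φ (J * I ^ n) :=
        Ideal.mem_map_of_mem φ ih
      have h2 : Ideal.map φ (J * I ^ n) ≤ J * I ^ (n + 1) := by
        rw [Ideal.map_mul, Ideal.map_pow]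
        calc Ideal.map φ J * Ideal.map φ I ^ n ≤ (J * I) * I ^ n :=
              Ideal.mul_mono hmapJ (Ideal.pow_right_mono hmapI n)
          _ = J * I ^ (n + 1) := by ring
      exact h2 h1
  have hiter : ∀ n (x : PowerSeries S), (⇑φ)^[n] x = (φ ^ n) x := by
    intro n x
    rw [RingHom.coe_pow]
  have key2 : ∀ a : ℕ → PowerSeries S, (∀ n, a n ∈ J) →
      ∀ n : ℕ, (⇑φ)^[n] (a n) ∈ I ^ (n + 1) := by
    intro a ha n
    obtain ⟨c, hc⟩ := Ideal.mem_span_singleton.mp (ha n)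
    have : (⇑φ)^[n] (a n) = (⇑φ)^[n] Z * (⇑φ)^[n] c := by
      rw [hiter, hiter, hiter, ← map_mul, hc]
    rw [this]
    have hmem : (⇑φ)^[n] Z ∈ I ^ (n + 1) := by
      have := key n
      have hle : J * I ^ n ≤ I ^ (n + 1) := by
        rw [pow_succ']
        exact Ideal.mul_mono hZI le_rfl
      exact hle this
    exact Ideal.mul_mem_right _ _ hmem
  refine ⟨key, key2, ?_⟩
  intro a ha k
  refine ⟨k, fun n hn => ?_⟩
  have := key2 a ha n
  exact Ideal.pow_le_pow_right (by omega) this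
end
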